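/- arXiv:math-ph/9809027 — 6 statements merged into one kernel-verified Lean document; each statement's English description precedes it below -/
import Mathlib

section
/- For every q ∈ (0,1), setting Δ = (q + q⁻¹)/2 and B = (1 − q²)/(2(1 + q²)), the two-site kink Hamiltonian h(Δ) = (1/4)·𝟙⊗𝟙 − S³⊗S³ − Δ⁻¹(S¹⊗S¹ + S²⊗S²) + B(S³⊗𝟙 − 𝟙⊗S³), regarded as a 4×4 complex matrix on ℂ²⊗ℂ², is Hermitian and positive semidefinite. -/
open Matrix Kronecker ComplexOrder

noncomputable section

/-- Spin-1/2 matrix `S¹ = (1/2)[[0,1],[1,0]]`. -/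
def S1 : Matrix (Fin 2) (Fin 2) ℂ := !![0, 1/2; 1/2, 0]

/-- Spin-1/2 matrix `S² = (1/2)[[0,−i],[i,0]]`. -/
def S2 : Matrix (Fin 2) (Fin 2) ℂ := !![0, -Complex.I/2; Complex.I/2, 0]

/-- Spin-1/2 matrix `S³ = (1/2)[[1,0],[0,−1]]`. -/
def S3 : Matrix (Fin 2) (Fin 2) ℂ := !![1/2, 0; 0, -1/2]

/-- The anisotropy `Δ = (q + q⁻¹)/2`. -/
def Delta (q : ℝ) : ℝ := (q + q⁻¹) / 2

/-- The boundary field `B = (1 − q²)/(2(1 + q²)) = (1/2)√(1 − 1/Δ²)`. -/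
def Bfield (q : ℝ) : ℝ := (1 - q ^ 2) / (2 * (1 + q ^ 2))

/-- The two-site kink Hamiltonian
`h(Δ) = (1/4)·𝟙⊗𝟙 − S³⊗S³ − Δ⁻¹(S¹⊗S¹ + S²⊗S²) + B(S³⊗𝟙 − 𝟙⊗S³)` on `ℂ²⊗ℂ²`. -/
def hKink (q : ℝ) : Matrix (Fin 2 × Fin 2) (Fin 2 × Fin 2) ℂ :=
  (1 / 4 : ℂ) • (1 : Matrix (Fin 2 × Fin 2) (Fin 2 × Fin 2) ℂ)
    - S3 ⊗ₖ S3 - ((Delta q : ℂ))⁻¹ • (S1 ⊗ₖ S1 + S2 ⊗ₖ S2)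
    + (Bfield q : ℂ) • (S3 ⊗ₖ (1 : Matrix (Fin 2) (Fin 2) ℂ)
        - (1 : Matrix (Fin 2) (Fin 2) ℂ) ⊗ₖ S3)

/-- The (normalized) kink ground-state vector `(0, 1, −q, 0)/√(1+q²)`,
packaged as a 1×4 matrix. -/
def kinkVec (q : ℝ) : Matrix (Fin 1) (Fin 2 × Fin 2) ℂ :=
  Matrix.of fun _ p =>
    !![0, (((Real.sqrt (1 + q ^ 2))⁻¹ : ℝ) : ℂ);
       ((-(q / Real.sqrt (1 + q ^ 2)) : ℝ) : ℂ), 0] p.1 p.2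

set_option maxHeartbeats 1000000 in
/-- The kink Hamiltonian factors as `vᴴ v` for the kink vector `v`. -/
lemma hKink_eq (q : ℝ) (hq0 : 0 < q) :
    hKink q = (kinkVec q)ᴴ * kinkVec q := by
  have h1q : (0:ℝ) < 1 + q ^ 2 := by positivity
  have hsne : Real.sqrt (1 + q ^ 2) ≠ 0 := by positivity
  have hsC : ((Real.sqrt (1 + q ^ 2) : ℝ) : ℂ) * ((Real.sqrt (1 + q ^ 2) : ℝ) : ℂ)
      = 1 + (q:ℂ) ^ 2 := by
    rw [← Complex.ofReal_mul, Real.mul_self_sqrt h1q.le]; push_cast; ring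
  have hsCne : ((Real.sqrt (1 + q ^ 2) : ℝ) : ℂ) ≠ 0 := by exact_mod_cast hsne
  have hqC : (q:ℂ) ≠ 0 := by exact_mod_cast hq0.ne'
  have h1qC : (1:ℂ) + (q:ℂ) ^ 2 ≠ 0 := by
    rw [← hsC]; exact mul_ne_zero hsCne hsCne
  have hqq : (q:ℂ) + (q:ℂ)⁻¹ ≠ 0 := by
    field_simp
    intro h
    apply h1qC
    rcases div_eq_zero_iff.mp h with h | h
    · linear_combination h
    · exact absurd h hqC
  have hsC2 : ((Real.sqrt (1 + q ^ 2) : ℝ) : ℂ) ^ 2 = 1 + (q:ℂ) ^ 2 := by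
    rw [sq]; exact hsC
  ext ⟨i₁, i₂⟩ ⟨j₁, j₂⟩
  fin_cases i₁ <;> fin_cases i₂ <;> fin_cases j₁ <;> fin_cases j₂ <;>
    simp [hKink, kinkVec, S1, S2, S3, Bfield, Delta, Matrix.mul_apply,
      Fin.sum_univ_one, Matrix.one_apply] <;>
    first
      | decide
      | (field_simp; linear_combination (-(q:ℂ)) * Complex.I_sq)
      | (field_simp; simp only [hsC2]; linear_combination (1 + (q:ℂ)^2) * Complex.I_sq)
      | (field_simp; simp only [hsC2]; ring)
      | (field_simp; linear_combination 32 * hsC2)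
      | (field_simp; linear_combination (-16*(q:ℂ) - 16*(q:ℂ)^3) * hsC2)
      | (field_simp; linear_combination 64*(q:ℂ)^2 * hsC2)
      | (field_simp; ring)
      | field_simp

/-- For every `q ∈ (0,1)`, with `Δ = (q + q⁻¹)/2` and
`B = (1 − q²)/(2(1 + q²))`, the two-site kink Hamiltonian `h(Δ)`, regarded as a
4×4 complex matrix on `ℂ²⊗ℂ²`, is Hermitian and positive semidefinite. -/
theorem hKink_isHermitian_and_posSemidef (q : ℝ) (hq0 : 0 < q) (hq1 : q < 1) :
    (hKink q).IsHermitian ∧ (hKink q).PosSemidef := by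
  have h := Matrix.posSemidef_conjTranspose_mul_self (kinkVec q)
  rw [hKink_eq q hq0]
  exact ⟨h.isHermitian, h⟩
end
end

section
/- For every q ∈ (0,1), with Δ = (q + q⁻¹)/2 and B = (1 − q²)/(2(1 + q²)), and for every w ∈ ℂ, the product vector (|↑⟩ + w|↓⟩) ⊗ (|↑⟩ + qw|↓⟩) lies in the kernel of the two-site kink Hamiltonian h(Δ): h(Δ)((|↑⟩ + w|↓⟩) ⊗ (|↑⟩ + qw|↓⟩)) = 0. -/
open Matrix Kronecker ComplexOrder

noncomputable section

/-- The basis vector `|↑⟩ = (1,0)` of `ℂ²`. -/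
def upv : Fin 2 → ℂ := ![1, 0]

/-- The basis vector `|↓⟩ = (0,1)` of `ℂ²`. -/
def downv : Fin 2 → ℂ := ![0, 1]

/-- The tensor product `v ⊗ w ∈ ℂ²⊗ℂ²` of two vectors of `ℂ²`. -/
def tens (v w : Fin 2 → ℂ) : Fin 2 × Fin 2 → ℂ := fun p => v p.1 * w p.2

/-- For every `q ∈ (0,1)` and every `w ∈ ℂ`, the product vector
`(|↑⟩ + w|↓⟩) ⊗ (|↑⟩ + qw|↓⟩)` lies in the kernel of the two-site kink
Hamiltonian `h(Δ)`. -/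
theorem hKink_product_kernel (q : ℝ) (hq0 : 0 < q) (hq1 : q < 1) (w : ℂ) :
    (hKink q).mulVec (tens (upv + w • downv) (upv + ((q : ℂ) * w) • downv)) = 0 := by
  have hq : (q : ℂ) ≠ 0 := Complex.ofReal_ne_zero.mpr hq0.ne'
  have hd : (Delta q : ℂ) ≠ 0 := by
    have : Delta q > 0 := by
      have : 0 < q⁻¹ := inv_pos.mpr hq0
      unfold Delta; positivity
    exact Complex.ofReal_ne_zero.mpr this.ne'
  have h2 : (1 + (q:ℂ)^2) ≠ 0 := by
    intro h
    have : ((1 + q^2 : ℝ) : ℂ) = 0 := by push_cast; linear_combination h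
    have : (1 + q^2 : ℝ) = 0 := by exact_mod_cast this
    nlinarith
  funext p
  obtain ⟨i, j⟩ := p
  simp only [hKink, Delta, Bfield, S1, S2, S3, tens, upv, downv, mulVec, dotProduct,
    Fintype.sum_prod_type, Fin.sum_univ_two, kroneckerMap_apply, Matrix.one_apply,
    Matrix.sub_apply, Matrix.add_apply, Matrix.smul_apply, Pi.add_apply, Pi.smul_apply,
    Pi.zero_apply, smul_eq_mul]
  fin_cases i <;> fin_cases j <;>
    simp [Matrix.one_apply, Prod.ext_iff] <;>
    field_simp <;> ring_nf <;> simp only [Complex.I_sq] <;> ring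
end
end

section
/- For every q ∈ (0,1), every L ≥ 1, and every k ∈ {0,1,…,L+1}, the intersection of the kernel of H_L with the magnetization sector 𝓗_k (the eigenspace of S³_tot with eigenvalue (L+1)/2 − k) is exactly one-dimensional, spanned by the vector ψ_k = Σ_{D ⊆ {0,…,L}, |D| = k} q^{Σ_{x∈D} x} |D⟩. Consequently the kernel of H_L has dimension L+2. -/
open Matrix Kronecker ComplexOrder

noncomputable section

/-- The operator acting as the two-site matrix `M` on the tensor factors of the sites
`a` and `b` (in this order) and as the identity on all other factors. -/
def twoSiteOp {ι : Type*} [Fintype ι] [DecidableEq ι]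
    (M : Matrix (Fin 2 × Fin 2) (Fin 2 × Fin 2) ℂ) (a b : ι) :
    Matrix (ι → Fin 2) (ι → Fin 2) ℂ :=
  fun σ τ => M (σ a, σ b) (τ a, τ b) *
    (if ∀ y, y ≠ a → y ≠ b → σ y = τ y then 1 else 0)

/-- The operator acting as the one-site matrix `A` on the tensor factor of the site `a`
and as the identity on all other factors. -/
def siteOp {ι : Type*} [Fintype ι] [DecidableEq ι]
    (A : Matrix (Fin 2) (Fin 2) ℂ) (a : ι) : Matrix (ι → Fin 2) (ι → Fin 2) ℂ :=
  fun σ τ => A (σ a) (τ a) * (if ∀ y, y ≠ a → σ y = τ y then 1 else 0)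

/-- The finite XXZ kink chain Hamiltonian `H_L = Σ_{x=0}^{L−1} h(Δ)_{x,x+1}`
on `(ℂ²)^{⊗(L+1)}` (sites `0,…,L`). -/
def HChain (L : ℕ) (q : ℝ) : Matrix (Fin (L + 1) → Fin 2) (Fin (L + 1) → Fin 2) ℂ :=
  ∑ x : Fin L, twoSiteOp (hKink q) x.castSucc x.succ

/-- The kink product vector `φ(z) = ⊗_{x=0}^{L}(|↑⟩ + z q^x |↓⟩)`. -/
def phi (L : ℕ) (q : ℝ) (z : ℂ) : (Fin (L + 1) → Fin 2) → ℂ :=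
  fun σ => ∏ x : Fin (L + 1), (![1, z * (q : ℂ) ^ (x : ℕ)] : Fin 2 → ℂ) (σ x)

/-- The total third component of the spin, `S³_tot = Σ_{x=0}^{L} S³_x`. -/
def S3tot (L : ℕ) : Matrix (Fin (L + 1) → Fin 2) (Fin (L + 1) → Fin 2) ℂ :=
  ∑ x : Fin (L + 1), siteOp S3 x

/-- The sector ground state vector `ψ_k = Σ_{D ⊆ {0,…,L}, |D| = k} q^{Σ_{x∈D} x} |D⟩`,
where `|D⟩` has `|↓⟩` at the sites of `D` and `|↑⟩` elsewhere; in components,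
`ψ_k(σ) = q^{Σ_{σ x = ↓} x}` if `σ` has exactly `k` down spins and `0` otherwise. -/
def psiSector (L : ℕ) (q : ℝ) (k : ℕ) : (Fin (L + 1) → Fin 2) → ℂ :=
  fun σ =>
    if (Finset.univ.filter fun x => σ x = 1).card = k then
      (q : ℂ) ^ (∑ x ∈ Finset.univ.filter (fun x => σ x = 1), (x : ℕ))
    else 0

namespace KinkAux

def eVec (q : ℝ) : Fin 2 × Fin 2 → ℂ :=
  fun p => !![0, 1; -(q:ℂ), 0] p.1 p.2

set_option maxHeartbeats 1000000 in
lemma hKink_apply (q : ℝ) (hq : 0 < q) (i j : Fin 2 × Fin 2) :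
    hKink q i j = (1/(1+(q:ℂ)^2)) * eVec q i * eVec q j := by
  have hq0 : (q:ℂ) ≠ 0 := by exact_mod_cast (ne_of_gt hq)
  have h1 : (1:ℂ) + (q:ℂ)^2 ≠ 0 := by
    have : (0:ℝ) < 1 + q^2 := by positivity
    have h2 : ((1 + q^2 : ℝ) : ℂ) ≠ 0 := by exact_mod_cast (ne_of_gt this)
    push_cast at h2; exact h2
  have hD : ((Delta q : ℝ) : ℂ)⁻¹ = 2 * q / (1 + (q:ℂ)^2) := by
    have hq' : q ≠ 0 := ne_of_gt hq
    rw [Delta]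
    push_cast
    rw [inv_eq_iff_eq_inv, eq_comm, inv_eq_iff_eq_inv] at *
    field_simp
    ring
  obtain ⟨i1, i2⟩ := i
  obtain ⟨j1, j2⟩ := j
  fin_cases i1 <;> fin_cases i2 <;> fin_cases j1 <;> fin_cases j2 <;>
    · simp only [hKink, eVec, Bfield, S1, S2, S3, hD, Matrix.add_apply, Matrix.sub_apply,
        Matrix.smul_apply, Matrix.kroneckerMap_apply, Matrix.one_apply, smul_eq_mul,
        Prod.mk.injEq, Matrix.cons_val', Matrix.cons_val_zero, Matrix.cons_val_one,
        Matrix.head_cons, Matrix.head_fin_const, Matrix.empty_val', Matrix.cons_val_fin_one]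
      push_cast
      norm_num
      try field_simp
      try ring
      try tauto
      try norm_num [Complex.I_sq]



open Function

variable {ι : Type*} [Fintype ι] [DecidableEq ι]

lemma sum_env {a b : ι} (hab : a ≠ b) (σ : ι → Fin 2) (g : (ι → Fin 2) → ℂ) :
    ∑ τ : ι → Fin 2, (if ∀ y, y ≠ a → y ≠ b → σ y = τ y then (1:ℂ) else 0) * g τ
      = ∑ p : Fin 2 × Fin 2, g (update (update σ a p.1) b p.2) := by
  simp only [ite_mul, one_mul, zero_mul]
  rw [← Finset.sum_filter]
  refine Finset.sum_bij' (fun τ _ => ((τ a, τ b) : Fin 2 × Fin 2))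
    (fun p _ => update (update σ a p.1) b p.2) ?_ ?_ ?_ ?_ ?_
  · intro τ hτ; exact Finset.mem_univ _
  · intro p hp
    simp only [Finset.mem_filter, Finset.mem_univ, true_and]
    intro y hya hyb
    simp [update_apply, hya, hyb]
  · intro τ hτ
    simp only [Finset.mem_filter, Finset.mem_univ, true_and] at hτ
    funext y
    by_cases hyb : y = b
    · subst hyb; simp [update_apply]
    · by_cases hya : y = a
      · subst hya; simp [update_apply, hab, hyb]
      · simp [update_apply, hya, hyb, hτ y hya hyb]
  · intro p hp
    simp [update_apply, hab]
  · intro τ hτ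
    simp only [Finset.mem_filter, Finset.mem_univ, true_and] at hτ
    congr 1
    funext y
    by_cases hyb : y = b
    · subst hyb; simp [update_apply]
    · by_cases hya : y = a
      · subst hya; simp [update_apply, hab, hyb]
      · simp [update_apply, hya, hyb, hτ y hya hyb]

lemma sum_env1 {a : ι} (σ : ι → Fin 2) (g : (ι → Fin 2) → ℂ) :
    ∑ τ : ι → Fin 2, (if ∀ y, y ≠ a → σ y = τ y then (1:ℂ) else 0) * g τ
      = ∑ i : Fin 2, g (update σ a i) := by
  simp only [ite_mul, one_mul, zero_mul]
  rw [← Finset.sum_filter]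
  refine Finset.sum_bij' (fun τ _ => τ a) (fun i _ => update σ a i) ?_ ?_ ?_ ?_ ?_
  · intro τ hτ; exact Finset.mem_univ _
  · intro i hi
    simp only [Finset.mem_filter, Finset.mem_univ, true_and]
    intro y hya
    simp [update_apply, hya]
  · intro τ hτ
    simp only [Finset.mem_filter, Finset.mem_univ, true_and] at hτ
    funext y
    by_cases hya : y = a
    · subst hya; simp [update_apply]
    · simp [update_apply, hya, hτ y hya]
  · intro i hi; simp [update_apply]
  · intro τ hτ
    simp only [Finset.mem_filter, Finset.mem_univ, true_and] at hτ
    congr 1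
    funext y
    by_cases hya : y = a
    · subst hya; simp [update_apply]
    · simp [update_apply, hya, hτ y hya]

lemma twoSiteOp_mulVec (M : Matrix (Fin 2 × Fin 2) (Fin 2 × Fin 2) ℂ) {a b : ι}
    (hab : a ≠ b) (v : (ι → Fin 2) → ℂ) (σ : ι → Fin 2) :
    (twoSiteOp M a b).mulVec v σ
      = ∑ p : Fin 2 × Fin 2, M (σ a, σ b) p * v (update (update σ a p.1) b p.2) := by
  unfold Matrix.mulVec dotProduct twoSiteOp
  have := sum_env hab σ (fun τ => M (σ a, σ b) (τ a, τ b) * v τ)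
  rw [show (∑ τ : ι → Fin 2, M (σ a, σ b) (τ a, τ b) *
      (if ∀ y, y ≠ a → y ≠ b → σ y = τ y then (1:ℂ) else 0) * v τ)
    = ∑ τ : ι → Fin 2, (if ∀ y, y ≠ a → y ≠ b → σ y = τ y then (1:ℂ) else 0) *
        (M (σ a, σ b) (τ a, τ b) * v τ) from by
      refine Finset.sum_congr rfl fun τ _ => by ring]
  rw [this]
  refine Finset.sum_congr rfl fun p _ => ?_
  have hp : ((update (update σ a p.1) b p.2) a, (update (update σ a p.1) b p.2) b) = p := by
    ext <;> simp [update_apply, hab]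
  rw [hp]

lemma twoSiteOp_conjTranspose (M : Matrix (Fin 2 × Fin 2) (Fin 2 × Fin 2) ℂ) (a b : ι) :
    (twoSiteOp M a b)ᴴ = twoSiteOp Mᴴ a b := by
  ext σ τ
  have hiff : (∀ y, y ≠ a → y ≠ b → τ y = σ y) ↔ (∀ y, y ≠ a → y ≠ b → σ y = τ y) := by
    constructor <;> exact fun h y h1 h2 => (h y h1 h2).symm
  simp only [Matrix.conjTranspose_apply, twoSiteOp, star_mul', apply_ite (star : ℂ → ℂ),
    star_one, star_zero, hiff]
  try ring

lemma twoSiteOp_mul (M N : Matrix (Fin 2 × Fin 2) (Fin 2 × Fin 2) ℂ) {a b : ι} (hab : a ≠ b) :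
    twoSiteOp M a b * twoSiteOp N a b = twoSiteOp (M * N) a b := by
  ext σ τ
  simp only [Matrix.mul_apply, twoSiteOp]
  rw [show (∑ ρ : ι → Fin 2, M (σ a, σ b) (ρ a, ρ b) *
      (if ∀ y, y ≠ a → y ≠ b → σ y = ρ y then (1:ℂ) else 0) *
      (N (ρ a, ρ b) (τ a, τ b) * (if ∀ y, y ≠ a → y ≠ b → ρ y = τ y then (1:ℂ) else 0)))
    = ∑ ρ : ι → Fin 2, (if ∀ y, y ≠ a → y ≠ b → σ y = ρ y then (1:ℂ) else 0) *
        (M (σ a, σ b) (ρ a, ρ b) * N (ρ a, ρ b) (τ a, τ b) *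
          (if ∀ y, y ≠ a → y ≠ b → ρ y = τ y then (1:ℂ) else 0)) from by
      refine Finset.sum_congr rfl fun ρ _ => by ring]
  rw [sum_env hab σ]
  have key : ∀ p : Fin 2 × Fin 2,
      (M (σ a, σ b) ((update (update σ a p.1) b p.2) a, (update (update σ a p.1) b p.2) b) *
        N ((update (update σ a p.1) b p.2) a, (update (update σ a p.1) b p.2) b) (τ a, τ b) *
        (if ∀ y, y ≠ a → y ≠ b → (update (update σ a p.1) b p.2) y = τ y then (1:ℂ) else 0))
      = M (σ a, σ b) p * N p (τ a, τ b) *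
        (if ∀ y, y ≠ a → y ≠ b → σ y = τ y then (1:ℂ) else 0) := by
    intro p
    have h1 : (update (update σ a p.1) b p.2) a = p.1 := by simp [update_apply, hab]
    have h2 : (update (update σ a p.1) b p.2) b = p.2 := by simp [update_apply]
    rw [h1, h2]
    congr 1
    have hiff : (∀ y, y ≠ a → y ≠ b → (update (update σ a p.1) b p.2) y = τ y)
        ↔ (∀ y, y ≠ a → y ≠ b → σ y = τ y) := by
      refine forall_congr' fun y => ?_
      by_cases hya : y = a
      · simp [hya]
      · by_cases hyb : y = b
        · simp [hyb]
        · simp [update_apply, hya, hyb]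
    simp only [hiff]
  simp only [key]
  rw [← Finset.sum_mul]


end KinkAux

namespace KinkAux

open Function

def AMat (q : ℝ) : Matrix (Fin 2 × Fin 2) (Fin 2 × Fin 2) ℂ :=
  fun i j => (if i = ((0:Fin 2),(1:Fin 2)) then (Real.sqrt (1/(1+q^2)) : ℂ) else 0) * eVec q j

lemma star_eVec (q : ℝ) (p : Fin 2 × Fin 2) : star (eVec q p) = eVec q p := by
  obtain ⟨p1, p2⟩ := p
  fin_cases p1 <;> fin_cases p2 <;>
    simp [eVec, Complex.star_def, Complex.conj_ofReal]

lemma AMat_factor (q : ℝ) (hq : 0 < q) : (AMat q)ᴴ * AMat q = hKink q := by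
  have hc : (0:ℝ) ≤ 1/(1+q^2) := by positivity
  ext i j
  rw [Matrix.mul_apply, hKink_apply q hq i j]
  rw [Finset.sum_eq_single ((0:Fin 2),(1:Fin 2))]
  · have hs : ((Real.sqrt (1/(1+q^2)) : ℝ):ℂ) * ((Real.sqrt (1/(1+q^2)) : ℝ):ℂ)
        = ((1:ℂ)/(1+(q:ℂ)^2)) := by
      rw [← Complex.ofReal_mul, Real.mul_self_sqrt hc]
      push_cast
      ring
    simp only [Matrix.conjTranspose_apply, AMat, if_true, if_pos rfl, star_mul', star_eVec,
      Complex.star_def, Complex.conj_ofReal]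
    linear_combination (eVec q i * eVec q j) * hs
  · intro k _ hk
    simp [Matrix.conjTranspose_apply, AMat, if_neg hk]
  · intro h
    exact absurd (Finset.mem_univ _) h

lemma twoSiteOp_hKink_factor {ι : Type*} [Fintype ι] [DecidableEq ι]
    (q : ℝ) (hq : 0 < q) {a b : ι} (hab : a ≠ b) :
    twoSiteOp (hKink q) a b = (twoSiteOp (AMat q) a b)ᴴ * twoSiteOp (AMat q) a b := by
  rw [twoSiteOp_conjTranspose, twoSiteOp_mul _ _ hab, AMat_factor q hq]

end KinkAux

namespace KinkAux

open Function

lemma upd4 {ι : Type*} [DecidableEq ι] {a b : ι} (hab : a ≠ b) (σ : ι → Fin 2)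
    (i0 j0 i j : Fin 2) :
    update (update (update (update σ a i0) b j0) a i) b j = update (update σ a i) b j := by
  funext y
  by_cases hyb : y = b
  · subst hyb; simp [update_apply]
  · by_cases hya : y = a
    · subst hya; simp [update_apply, hab, hyb]
    · simp [update_apply, hya, hyb]

def Fc (L : ℕ) (q : ℝ) (v : (Fin (L+1) → Fin 2) → ℂ) : Prop :=
  ∀ (x : Fin L) (σ : Fin (L+1) → Fin 2),
    v (update (update σ x.castSucc 0) x.succ 1)
      = (q:ℂ) * v (update (update σ x.castSucc 1) x.succ 0)

lemma sum_mulVec' {m n : Type*} [Fintype m] [Fintype n] {ι : Type*} (s : Finset ι)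
    (A : ι → Matrix m n ℂ) (v : n → ℂ) :
    (∑ x ∈ s, A x) *ᵥ v = ∑ x ∈ s, (A x) *ᵥ v := by
  ext i
  simp only [Matrix.mulVec, dotProduct, Matrix.sum_apply, Finset.sum_apply, Finset.sum_mul]
  rw [Finset.sum_comm]

lemma dotProduct_sum' {n : Type*} [Fintype n] {ι : Type*} (s : Finset ι) (u : n → ℂ)
    (w : ι → n → ℂ) :
    u ⬝ᵥ (∑ x ∈ s, w x) = ∑ x ∈ s, u ⬝ᵥ (w x) := by
  simp only [dotProduct, Finset.sum_apply, Finset.mul_sum]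
  rw [Finset.sum_comm]

lemma sqrtc_ne (q : ℝ) : ((Real.sqrt (1/(1+q^2)) : ℝ):ℂ) ≠ 0 := by
  have h : 0 < Real.sqrt (1/(1+q^2)) := Real.sqrt_pos.mpr (by positivity)
  exact_mod_cast h.ne'

lemma hchain_mulVec_eq_zero_iff {L : ℕ} {q : ℝ} (hq : 0 < q) (v : (Fin (L+1) → Fin 2) → ℂ) :
    (HChain L q) *ᵥ v = 0 ↔ Fc L q v := by
  have hab : ∀ x : Fin L, (x.castSucc : Fin (L+1)) ≠ x.succ :=
    fun x => (Fin.castSucc_lt_succ : x.castSucc < x.succ).ne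
  constructor
  · intro hv
    have hzero : ∑ x : Fin L, star ((twoSiteOp (AMat q) x.castSucc x.succ) *ᵥ v)
        ⬝ᵥ ((twoSiteOp (AMat q) x.castSucc x.succ) *ᵥ v) = 0 := by
      have h0 : star v ⬝ᵥ ((HChain L q) *ᵥ v) = 0 := by
        rw [hv]; simp [dotProduct]
      rw [HChain, sum_mulVec', dotProduct_sum'] at h0
      rw [← h0]
      refine Finset.sum_congr rfl fun x _ => ?_
      conv_rhs => rw [twoSiteOp_hKink_factor q hq (hab x), ← Matrix.mulVec_mulVec,
        Matrix.dotProduct_mulVec, ← Matrix.star_mulVec]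
    have hx : ∀ x : Fin L, (twoSiteOp (AMat q) x.castSucc x.succ) *ᵥ v = 0 := by
      intro x
      have h1 := (Finset.sum_eq_zero_iff_of_nonneg (fun x _ =>
        dotProduct_star_self_nonneg _)).mp hzero x (Finset.mem_univ x)
      exact dotProduct_star_self_eq_zero.mp h1
    intro x σ
    have h := congrFun (hx x) (update (update σ x.castSucc 0) x.succ 1)
    rw [twoSiteOp_mulVec _ (hab x)] at h
    have ha : (update (update σ x.castSucc 0) x.succ 1) x.castSucc = 0 := by
      simp [update_apply, hab x]
    have hb : (update (update σ x.castSucc 0) x.succ 1) x.succ = 1 := by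
      simp [update_apply]
    rw [ha, hb] at h
    simp only [Fintype.sum_prod_type, Fin.sum_univ_two, AMat, eVec,
      upd4 (hab x), Pi.zero_apply, Matrix.of_apply, if_true,
      Matrix.cons_val', Matrix.cons_val_zero, Matrix.cons_val_one, Matrix.head_cons,
      Matrix.head_fin_const, Matrix.empty_val', Matrix.cons_val_fin_one, if_pos rfl] at h
    have h2 : ((Real.sqrt (1/(1+q^2)) : ℝ):ℂ) *
        (v (update (update σ x.castSucc 0) x.succ 1)
          - (q:ℂ) * v (update (update σ x.castSucc 1) x.succ 0)) = 0 := by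
      linear_combination h
    rcases mul_eq_zero.mp h2 with h3 | h3
    · exact absurd h3 (sqrtc_ne q)
    · linear_combination h3
  · intro hF
    rw [HChain, sum_mulVec']
    refine Finset.sum_eq_zero fun x _ => ?_
    funext σ
    rw [twoSiteOp_mulVec _ (hab x)]
    simp only [hKink_apply q hq, Fintype.sum_prod_type, Fin.sum_univ_two, eVec,
      Matrix.of_apply, if_true,
      Matrix.cons_val', Matrix.cons_val_zero, Matrix.cons_val_one, Matrix.head_cons,
      Matrix.head_fin_const, Matrix.empty_val', Matrix.cons_val_fin_one, Pi.zero_apply]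
    rw [hF x σ]
    ring

end KinkAux

namespace KinkAux

open Function

def dcount {ι : Type*} [Fintype ι] [DecidableEq ι] (σ : ι → Fin 2) : ℕ :=
  (Finset.univ.filter fun x => σ x = 1).card

lemma siteOp_S3_mulVec {ι : Type*} [Fintype ι] [DecidableEq ι] (a : ι)
    (v : (ι → Fin 2) → ℂ) (σ : ι → Fin 2) :
    (siteOp S3 a).mulVec v σ = ((1:ℂ)/2 - ((σ a : ℕ) : ℂ)) * v σ := by
  unfold Matrix.mulVec dotProduct siteOp
  rw [show (∑ τ : ι → Fin 2, S3 (σ a) (τ a) *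
      (if ∀ y, y ≠ a → σ y = τ y then (1:ℂ) else 0) * v τ)
    = ∑ τ : ι → Fin 2, (if ∀ y, y ≠ a → σ y = τ y then (1:ℂ) else 0) *
        (S3 (σ a) (τ a) * v τ) from Finset.sum_congr rfl fun τ _ => by ring]
  rw [sum_env1 σ (fun τ => S3 (σ a) (τ a) * v τ)]
  have hupd : ∀ i : Fin 2, (update σ a i) a = i := fun i => by simp [update_apply]
  have hcase : σ a = 0 ∨ σ a = 1 := by
    obtain ⟨iv, hiv⟩ : ∃ i, σ a = i := ⟨_, rfl⟩
    fin_cases iv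
    · exact Or.inl hiv
    · exact Or.inr hiv
  rcases hcase with hiv | hiv <;>
  · have hself : update σ a (σ a) = σ := Function.update_eq_self a σ
    rw [hiv] at hself
    rw [Fin.sum_univ_two, hiv, hupd, hupd, hself]
    simp only [S3, Matrix.of_apply,
      Matrix.cons_val', Matrix.cons_val_zero, Matrix.cons_val_one, Matrix.head_cons,
      Matrix.head_fin_const, Matrix.empty_val', Matrix.cons_val_fin_one]
    norm_num

lemma cast_sum_eq_dcount {ι : Type*} [Fintype ι] [DecidableEq ι] (σ : ι → Fin 2) :
    ∑ a : ι, (((σ a : ℕ)) : ℂ) = (dcount σ : ℂ) := by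
  have h1 : ∀ a, ((σ a : ℕ) : ℂ) = if σ a = 1 then 1 else 0 := by
    intro a
    obtain ⟨iv, hiv⟩ : ∃ i, σ a = i := ⟨_, rfl⟩
    fin_cases iv <;> simp [hiv]
  simp only [h1]
  rw [dcount, Finset.card_filter]
  push_cast
  rfl

lemma s3tot_mulVec {L : ℕ} (v : (Fin (L+1) → Fin 2) → ℂ) (σ : Fin (L+1) → Fin 2) :
    (S3tot L).mulVec v σ = (((L:ℂ)+1)/2 - (dcount σ : ℂ)) * v σ := by
  rw [S3tot, sum_mulVec']
  rw [Finset.sum_apply]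
  simp only [siteOp_S3_mulVec]
  rw [← Finset.sum_mul, Finset.sum_sub_distrib, cast_sum_eq_dcount,
    Finset.sum_const, Finset.card_univ, Fintype.card_fin, nsmul_eq_mul]
  push_cast
  ring

lemma sector_iff {L : ℕ} (k : ℕ) (v : (Fin (L+1) → Fin 2) → ℂ) :
    (S3tot L).mulVec v = (((L:ℂ)+1)/2 - (k:ℂ)) • v ↔
      ∀ σ, dcount σ ≠ k → v σ = 0 := by
  constructor
  · intro h σ hσ
    have h1 := congrFun h σ
    rw [s3tot_mulVec] at h1
    simp only [Pi.smul_apply, smul_eq_mul] at h1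
    have h2 : ((dcount σ : ℂ) - (k:ℂ)) * v σ = 0 := by linear_combination -h1
    have h3 : (dcount σ : ℂ) - (k:ℂ) ≠ 0 := by
      intro hc
      exact hσ (by exact_mod_cast sub_eq_zero.mp hc)
    exact (mul_eq_zero.mp h2).resolve_left h3
  · intro h
    funext σ
    rw [s3tot_mulVec]
    simp only [Pi.smul_apply, smul_eq_mul]
    by_cases hσ : dcount σ = k
    · rw [hσ]
    · rw [h σ hσ]; ring

end KinkAux

namespace KinkAux

open Function Finset

def wsum {L : ℕ} (σ : Fin (L+1) → Fin 2) : ℕ :=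
  ∑ x ∈ Finset.univ.filter (fun x => σ x = 1), (x : ℕ)

lemma psiSector_eq {L : ℕ} (q : ℝ) (k : ℕ) (σ : Fin (L+1) → Fin 2) :
    psiSector L q k σ = if dcount σ = k then (q:ℂ) ^ (wsum σ) else 0 := rfl

def Tset {L : ℕ} (σ : Fin (L+1) → Fin 2) (a b : Fin (L+1)) : Finset (Fin (L+1)) :=
  ((Finset.univ.filter fun y => σ y = 1).erase a).erase b

lemma a_not_mem_Tset {L : ℕ} (σ : Fin (L+1) → Fin 2) {a b : Fin (L+1)} (hab : a ≠ b) :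
    a ∉ Tset σ a b := fun h => (Finset.mem_erase.mp (Finset.mem_of_mem_erase h)).1 rfl

lemma b_not_mem_Tset {L : ℕ} (σ : Fin (L+1) → Fin 2) (a b : Fin (L+1)) :
    b ∉ Tset σ a b := fun h => (Finset.mem_erase.mp h).1 rfl

lemma filter_upd01 {L : ℕ} (σ : Fin (L+1) → Fin 2) {a b : Fin (L+1)} (hab : a ≠ b) :
    (Finset.univ.filter fun y => update (update σ a 0) b 1 y = 1) = insert b (Tset σ a b) := by
  ext y
  simp only [Finset.mem_filter, Finset.mem_univ, true_and, Finset.mem_insert, Tset,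
    Finset.mem_erase]
  by_cases hyb : y = b
  · subst hyb; simp [update_apply]
  · by_cases hya : y = a
    · have hval : update (update σ a 0) b 1 y = (0 : Fin 2) := by
        simp [update_apply, hyb, hya, hab]
      rw [hval]
      constructor
      · intro h; exact absurd h (by decide)
      · rintro (h | ⟨-, h, -⟩)
        · exact absurd h hyb
        · exact absurd hya h
    · simp [update_apply, hya, hyb]

lemma filter_upd10 {L : ℕ} (σ : Fin (L+1) → Fin 2) {a b : Fin (L+1)} (hab : a ≠ b) :
    (Finset.univ.filter fun y => update (update σ a 1) b 0 y = 1) = insert a (Tset σ a b) := by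
  ext y
  simp only [Finset.mem_filter, Finset.mem_univ, true_and, Finset.mem_insert, Tset,
    Finset.mem_erase]
  by_cases hyb : y = b
  · have hval : update (update σ a 1) b 0 y = (0 : Fin 2) := by simp [update_apply, hyb]
    rw [hval]
    constructor
    · intro h; exact absurd h (by decide)
    · rintro (h | ⟨h, -⟩)
      · exact absurd (h.symm.trans hyb) hab
      · exact absurd hyb h
  · by_cases hya : y = a
    · have hval : update (update σ a 1) b 0 y = (1 : Fin 2) := by
        simp [update_apply, hyb, hya, hab]
      rw [hval]
      exact ⟨fun _ => Or.inl hya, fun _ => rfl⟩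
    · simp [update_apply, hya, hyb]

lemma psi_Fc (L : ℕ) (q : ℝ) (k : ℕ) : Fc L q (psiSector L q k) := by
  intro x σ
  have hab : (x.castSucc : Fin (L+1)) ≠ x.succ := (Fin.castSucc_lt_succ : x.castSucc < x.succ).ne
  rw [psiSector_eq, psiSector_eq]
  have h1 : dcount (update (update σ x.castSucc 0) x.succ 1)
      = (Tset σ x.castSucc x.succ).card + 1 := by
    rw [dcount, filter_upd01 σ hab, Finset.card_insert_of_notMem (b_not_mem_Tset σ _ _)]
  have h2 : dcount (update (update σ x.castSucc 1) x.succ 0)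
      = (Tset σ x.castSucc x.succ).card + 1 := by
    rw [dcount, filter_upd10 σ hab, Finset.card_insert_of_notMem (a_not_mem_Tset σ hab)]
  have h3 : wsum (update (update σ x.castSucc 0) x.succ 1)
      = (x:ℕ) + 1 + ∑ y ∈ Tset σ x.castSucc x.succ, (y:ℕ) := by
    rw [wsum, filter_upd01 σ hab, Finset.sum_insert (b_not_mem_Tset σ _ _)]
    simp [Fin.val_succ]
  have h4 : wsum (update (update σ x.castSucc 1) x.succ 0)
      = (x:ℕ) + ∑ y ∈ Tset σ x.castSucc x.succ, (y:ℕ) := by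
    rw [wsum, filter_upd10 σ hab, Finset.sum_insert (a_not_mem_Tset σ hab)]
    simp [Fin.coe_castSucc]
  rw [h1, h2, h3, h4]
  by_cases hc : (Tset σ x.castSucc x.succ).card + 1 = k
  · rw [if_pos hc, if_pos hc, pow_add, pow_add, pow_add]
    ring
  · rw [if_neg hc, if_neg hc, mul_zero]

lemma cardFilterLt (n k : ℕ) (hk : k ≤ n) :
    (Finset.univ.filter fun x : Fin n => (x:ℕ) < k).card = k := by
  refine Finset.card_eq_of_bijective (fun i hi => ⟨i, lt_of_lt_of_le hi hk⟩) ?_ ?_ ?_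
  · intro a ha
    exact ⟨(a:ℕ), (Finset.mem_filter.mp ha).2, Fin.ext rfl⟩
  · intro i hi
    simp only [Finset.mem_filter, Finset.mem_univ, true_and]
    exact hi
  · intro i j hi hj hij
    exact congrArg Fin.val hij

lemma cardFilterLe (n x : ℕ) (hx : x + 1 ≤ n) :
    (Finset.univ.filter fun y : Fin n => (y:ℕ) ≤ x).card = x + 1 := by
  refine Finset.card_eq_of_bijective (fun i hi => ⟨i, lt_of_lt_of_le hi hx⟩) ?_ ?_ ?_
  · intro a ha
    exact ⟨(a:ℕ), Nat.lt_succ_of_le (Finset.mem_filter.mp ha).2, Fin.ext rfl⟩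
  · intro i hi
    simp only [Finset.mem_filter, Finset.mem_univ, true_and]
    exact Nat.lt_succ_iff.mp hi
  · intro i j hi hj hij
    exact congrArg Fin.val hij

def base (L k : ℕ) : Fin (L+1) → Fin 2 := fun x => if (x:ℕ) < k then 1 else 0

lemma filter_base (L k : ℕ) :
    (Finset.univ.filter fun x => base L k x = 1)
      = (Finset.univ.filter fun x : Fin (L+1) => (x:ℕ) < k) := by
  refine Finset.filter_congr fun x _ => ?_
  unfold base
  by_cases h : (x:ℕ) < k
  · simp [h]
  · simp only [if_neg h]
    constructor
    · intro h0; exact absurd h0 (by decide)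
    · intro h0; exact absurd h0 h

lemma dcount_base (L k : ℕ) (hk : k ≤ L + 1) : dcount (base L k) = k := by
  rw [dcount, filter_base, cardFilterLt _ _ hk]

lemma eq_base {L k : ℕ} (hk : k ≤ L + 1) (σ : Fin (L+1) → Fin 2) (hd : dcount σ = k)
    (hnb : ∀ x : Fin L, ¬(σ x.castSucc = 0 ∧ σ x.succ = 1)) : σ = base L k := by
  have two : ∀ y : Fin (L+1), σ y = 0 ∨ σ y = 1 := by
    intro y
    obtain ⟨iv, hiv⟩ : ∃ i, σ y = i := ⟨_, rfl⟩
    fin_cases iv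
    · exact Or.inl hiv
    · exact Or.inr hiv
  have step : ∀ x : Fin L, σ x.succ = 1 → σ x.castSucc = 1 := by
    intro x h
    rcases two x.castSucc with h0 | h1
    · exact absurd ⟨h0, h⟩ (hnb x)
    · exact h1
  have down : ∀ (j : Fin (L+1)), σ j = 1 → ∀ i : Fin (L+1), i ≤ j → σ i = 1 := by
    have key : ∀ n : ℕ, ∀ (hn : n < L+1), σ ⟨n, hn⟩ = 1 →
        ∀ m, ∀ (hmn : m ≤ n), σ ⟨m, lt_of_le_of_lt hmn hn⟩ = 1 := by
      intro n
      induction n with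
      | zero =>
        intro hn h m hmn
        have : m = 0 := Nat.le_zero.mp hmn
        subst this; exact h
      | succ n ih =>
        intro hn h m hmn
        have hnL : n < L := Nat.succ_lt_succ_iff.mp hn
        have hcs : ((⟨n, hnL⟩ : Fin L).castSucc) = ⟨n, lt_of_le_of_lt (Nat.le_succ n) hn⟩ := by
          apply Fin.ext; simp
        have hsc : ((⟨n, hnL⟩ : Fin L).succ) = ⟨n+1, hn⟩ := by
          apply Fin.ext; simp
        have hn1 : σ ⟨n, lt_of_le_of_lt (Nat.le_succ n) hn⟩ = 1 := by
          have := step ⟨n, hnL⟩ (by rw [hsc]; exact h)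
          rwa [hcs] at this
        by_cases hm : m = n + 1
        · subst hm; exact h
        · have hmn' : m ≤ n := by omega
          exact ih (lt_of_le_of_lt (Nat.le_succ n) hn) hn1 m hmn'
    intro j hj i hij
    have h1 := key (j:ℕ) j.isLt (by rwa [Fin.eta]) (i:ℕ) hij
    rwa [Fin.eta] at h1
  have claimB : ∀ x : Fin (L+1), σ x = 1 → (x:ℕ) < k := by
    intro x hx
    by_contra hkx
    push_neg at hkx
    have hsub : (Finset.univ.filter fun y : Fin (L+1) => (y:ℕ) ≤ (x:ℕ))
        ⊆ (Finset.univ.filter fun y => σ y = 1) := by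
      intro y hy
      simp only [Finset.mem_filter, Finset.mem_univ, true_and] at hy ⊢
      exact down x hx y (Fin.le_def.mpr hy)
    have hcard := Finset.card_le_card hsub
    have : (Finset.univ.filter fun y : Fin (L+1) => (y:ℕ) ≤ (x:ℕ)).card = (x:ℕ) + 1 :=
      cardFilterLe _ _ (Nat.succ_le_of_lt x.isLt)
    rw [this] at hcard
    rw [← dcount, hd] at hcard
    omega
  have claimA : ∀ x : Fin (L+1), (x:ℕ) < k → σ x = 1 := by
    intro x hxk
    by_contra hx1
    have hx0 : σ x = 0 := (two x).resolve_right hx1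
    have hsub : (Finset.univ.filter fun y => σ y = 1)
        ⊆ (Finset.univ.filter fun y : Fin (L+1) => (y:ℕ) < (x:ℕ)) := by
      intro y hy
      simp only [Finset.mem_filter, Finset.mem_univ, true_and] at hy ⊢
      by_contra hxy
      push_neg at hxy
      have : σ x = 1 := down y hy x (Fin.le_def.mpr hxy)
      rw [this] at hx0; exact absurd hx0.symm (by decide)
    have hcard := Finset.card_le_card hsub
    rw [← dcount, hd, cardFilterLt _ _ (le_of_lt x.isLt)] at hcard
    omega
  funext y
  rcases two y with h0 | h1
  · rw [h0]
    unfold base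
    rw [if_neg (fun hc => by rw [claimA y hc] at h0; exact absurd h0.symm (by decide))]
  · rw [h1]
    unfold base
    rw [if_pos (claimB y h1)]

lemma sector_unique {L k : ℕ} {q : ℝ} (hq : 0 < q) (hk : k ≤ L + 1)
    (v : (Fin (L+1) → Fin 2) → ℂ)
    (hsupp : ∀ σ, dcount σ ≠ k → v σ = 0) (hF : Fc L q v) :
    ∃ c : ℂ, v = c • psiSector L q k := by
  have hqC : (q:ℂ) ≠ 0 := by exact_mod_cast hq.ne'
  set c : ℂ := v (base L k) / (q:ℂ) ^ (wsum (base L k)) with hc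
  refine ⟨c, ?_⟩
  have key : ∀ n : ℕ, ∀ σ : Fin (L+1) → Fin 2, dcount σ = k → wsum σ = n →
      v σ = c * (q:ℂ) ^ (wsum σ) := by
    intro n
    induction n using Nat.strong_induction_on with
    | _ n ih =>
      intro σ hd hw
      by_cases hb : ∃ x : Fin L, σ x.castSucc = 0 ∧ σ x.succ = 1
      · obtain ⟨x, h0, h1⟩ := hb
        have hab : (x.castSucc : Fin (L+1)) ≠ x.succ := (Fin.castSucc_lt_succ : x.castSucc < x.succ).ne
        set σ' := update (update σ x.castSucc 1) x.succ 0 with hσ'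
        have hσeq : update (update σ x.castSucc 0) x.succ 1 = σ := by
          funext y
          by_cases hyb : y = x.succ
          · subst hyb; simp [update_apply, h1]
          · by_cases hya : y = x.castSucc
            · subst hya; simp [update_apply, hab, h0]
            · simp [update_apply, hya, hyb]
        have hv : v σ = (q:ℂ) * v σ' := by
          have := hF x σ
          rwa [hσeq] at this
        have hfσ : (Finset.univ.filter fun y => σ y = 1)
            = insert x.succ (Tset σ x.castSucc x.succ) := by
          conv_lhs => rw [← hσeq]
          exact filter_upd01 σ hab
        have hfσ' : (Finset.univ.filter fun y => σ' y = 1)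
            = insert x.castSucc (Tset σ x.castSucc x.succ) := filter_upd10 σ hab
        have hd' : dcount σ' = k := by
          rw [dcount, hfσ', Finset.card_insert_of_notMem (a_not_mem_Tset σ hab)]
          rw [← hd, dcount, hfσ, Finset.card_insert_of_notMem (b_not_mem_Tset σ _ _)]
        have hwσ : wsum σ = (x:ℕ) + 1 + ∑ y ∈ Tset σ x.castSucc x.succ, (y:ℕ) := by
          rw [wsum, hfσ, Finset.sum_insert (b_not_mem_Tset σ _ _)]
          simp [Fin.val_succ]
        have hwσ' : wsum σ' = (x:ℕ) + ∑ y ∈ Tset σ x.castSucc x.succ, (y:ℕ) := by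
          rw [wsum, hfσ', Finset.sum_insert (a_not_mem_Tset σ hab)]
          simp [Fin.coe_castSucc]
        have hww : wsum σ' + 1 = wsum σ := by rw [hwσ, hwσ']; omega
        have hlt : wsum σ' < n := by omega
        have ihv := ih _ hlt σ' hd' rfl
        rw [hv, ihv, hwσ, hwσ']
        ring
      · push_neg at hb
        have hσbase : σ = base L k := eq_base hk σ hd (fun x hx => hb x hx.1 hx.2)
        subst hσbase
        rw [hc, div_mul_cancel₀ _ (pow_ne_zero _ hqC)]
  funext σ
  rw [Pi.smul_apply, psiSector_eq, smul_eq_mul]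
  by_cases hd : dcount σ = k
  · rw [if_pos hd, key (wsum σ) σ hd rfl]
  · rw [if_neg hd, hsupp σ hd, mul_zero]

end KinkAux

namespace KinkAux

open Function Finset

lemma psi_in_ker (L : ℕ) (q : ℝ) (hq : 0 < q) (k : ℕ) :
    (HChain L q).mulVec (psiSector L q k) = 0 :=
  (hchain_mulVec_eq_zero_iff hq _).mpr (psi_Fc L q k)

lemma dcount_le {L : ℕ} (σ : Fin (L+1) → Fin 2) : dcount σ ≤ L + 1 := by
  have h := Finset.card_filter_le Finset.univ (fun x => σ x = 1)
  rwa [Finset.card_univ, Fintype.card_fin] at h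

lemma ker_eq_span (L : ℕ) (q : ℝ) (hq : 0 < q) :
    LinearMap.ker (HChain L q).mulVecLin
      = Submodule.span ℂ (Set.range fun i : Fin (L+2) => psiSector L q (i : ℕ)) := by
  apply le_antisymm
  · intro v hv
    rw [LinearMap.mem_ker, Matrix.mulVecLin_apply] at hv
    have hFv : Fc L q v := (hchain_mulVec_eq_zero_iff hq v).mp hv
    have hdecomp : v = ∑ j ∈ Finset.range (L+2),
        (fun σ => if dcount σ = j then v σ else 0) := by
      funext σ
      rw [Finset.sum_apply]
      rw [Finset.sum_ite_eq (Finset.range (L+2)) (dcount σ) (fun _ => v σ)]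
      rw [if_pos (Finset.mem_range.mpr (Nat.lt_succ_of_le (dcount_le σ)))]
    rw [hdecomp]
    apply Submodule.sum_mem
    intro j hj
    have hjle : j ≤ L + 1 := Nat.lt_succ_iff.mp (Finset.mem_range.mp hj)
    have hsuppj : ∀ σ, dcount σ ≠ j → (if dcount σ = j then v σ else 0) = 0 :=
      fun σ h => if_neg h
    have hFj : Fc L q (fun σ => if dcount σ = j then v σ else 0) := by
      intro x σ
      have hab : (x.castSucc : Fin (L+1)) ≠ x.succ := (Fin.castSucc_lt_succ : x.castSucc < x.succ).ne
      have hd1 : dcount (update (update σ x.castSucc 0) x.succ 1)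
          = (Tset σ x.castSucc x.succ).card + 1 := by
        rw [dcount, filter_upd01 σ hab, Finset.card_insert_of_notMem (b_not_mem_Tset σ _ _)]
      have hd2 : dcount (update (update σ x.castSucc 1) x.succ 0)
          = (Tset σ x.castSucc x.succ).card + 1 := by
        rw [dcount, filter_upd10 σ hab, Finset.card_insert_of_notMem (a_not_mem_Tset σ hab)]
      simp only
      rw [hd1, hd2]
      by_cases hcj : (Tset σ x.castSucc x.succ).card + 1 = j
      · rw [if_pos hcj, if_pos hcj]
        exact hFv x σ
      · rw [if_neg hcj, if_neg hcj, mul_zero]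
    obtain ⟨c, hc⟩ := sector_unique hq hjle _ hsuppj hFj
    rw [hc]
    exact Submodule.smul_mem _ _ (Submodule.subset_span
      ⟨⟨j, Finset.mem_range.mp hj⟩, rfl⟩)
  · rw [Submodule.span_le]
    rintro _ ⟨i, rfl⟩
    rw [SetLike.mem_coe, LinearMap.mem_ker, Matrix.mulVecLin_apply]
    exact psi_in_ker L q hq _

lemma psi_linearIndependent (L : ℕ) (q : ℝ) (hq : 0 < q) :
    LinearIndependent ℂ (fun i : Fin (L+2) => psiSector L q (i : ℕ)) := by
  have hqC : (q:ℂ) ≠ 0 := by exact_mod_cast hq.ne'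
  rw [Fintype.linearIndependent_iff]
  intro g hg i
  have hile : (i:ℕ) ≤ L + 1 := Nat.lt_succ_iff.mp i.isLt
  have hbd : dcount (base L (i:ℕ)) = (i:ℕ) := dcount_base L (i:ℕ) hile
  have h := congrFun hg (base L (i:ℕ))
  rw [Finset.sum_apply] at h
  rw [Finset.sum_eq_single i] at h
  · rw [Pi.smul_apply, smul_eq_mul, psiSector_eq, if_pos hbd, Pi.zero_apply] at h
    exact (mul_eq_zero.mp h).resolve_right (pow_ne_zero _ hqC)
  · intro j _ hji
    rw [Pi.smul_apply, smul_eq_mul, psiSector_eq, if_neg, mul_zero]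
    rw [hbd]
    exact fun hc => hji (Fin.ext hc.symm)
  · intro hni
    exact absurd (Finset.mem_univ i) hni

end KinkAux

/-- For every `q ∈ (0,1)`, every `L ≥ 1`, and every `k ∈ {0,…,L+1}`,
the intersection of the kernel of `H_L` with the magnetization sector
(the eigenspace of `S³_tot` with eigenvalue `(L+1)/2 − k`) is exactly
one-dimensional, spanned by `ψ_k`. Consequently the kernel of `H_L` has
dimension `L+2`. -/
theorem HChain_kernel_sector (q : ℝ) (hq0 : 0 < q) (hq1 : q < 1)
    (L : ℕ) (hL : 1 ≤ L) (k : ℕ) (hk : k ≤ L + 1) :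
    (∀ v : (Fin (L + 1) → Fin 2) → ℂ,
      ((HChain L q).mulVec v = 0 ∧
          (S3tot L).mulVec v = ((((L : ℂ) + 1) / 2 - (k : ℂ))) • v) ↔
        ∃ c : ℂ, v = c • psiSector L q k) ∧
    Module.finrank ℂ (LinearMap.ker (HChain L q).mulVecLin) = L + 2 := by
  constructor
  · intro v
    constructor
    · rintro ⟨hv, hs⟩
      exact KinkAux.sector_unique hq0 hk v ((KinkAux.sector_iff k v).mp hs)
        ((KinkAux.hchain_mulVec_eq_zero_iff hq0 v).mp hv)
    · rintro ⟨c, rfl⟩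
      constructor
      · rw [Matrix.mulVec_smul, KinkAux.psi_in_ker L q hq0 k, smul_zero]
      · refine (KinkAux.sector_iff k _).mpr fun σ hσ => ?_
        rw [Pi.smul_apply, KinkAux.psiSector_eq, if_neg hσ, smul_zero]
  · rw [KinkAux.ker_eq_span L q hq0, finrank_span_eq_card
      (KinkAux.psi_linearIndependent L q hq0), Fintype.card_fin]
end
end

section
/- Let H be a Hermitian n×n complex matrix with smallest eigenvalue λ_min, and let ψ ∈ ℂⁿ be a unit vector. Then Re⟨ψ, A*[H,A]ψ⟩ ≥ 0 for every n×n complex matrix A if and only if Hψ = λ_min ψ. In other words, the pure solutions of the local stability inequalities are exactly the eigenvectors belonging to the smallest eigenvalue of H. -/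
open Matrix ComplexOrder

noncomputable section

/-- The standard inner product `⟨v,w⟩ = Σ_i conj(v i) · w i` on `ℂⁿ`,
conjugate-linear in the first argument. -/
def dotc {ι : Type*} [Fintype ι] (v w : ι → ℂ) : ℂ :=
  ∑ i, (starRingEnd ℂ) (v i) * w i

lemma dotc_eq_star_dot {ι : Type*} [Fintype ι] (v w : ι → ℂ) :
    dotc v w = star v ⬝ᵥ w := rfl

/-- Let `H` be a Hermitian `n×n` complex matrix with smallest
eigenvalue `λ_min`, and let `ψ ∈ ℂⁿ` be a unit vector. Then
`Re⟨ψ, A*[H,A]ψ⟩ ≥ 0` for every `n×n` complex matrix `A` if and only if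
`Hψ = λ_min ψ`: the pure solutions of the local stability inequalities are
exactly the eigenvectors belonging to the smallest eigenvalue of `H`. -/
theorem local_stability_iff_ground_eigenvector (n : ℕ) (hn : 0 < n)
    (H : Matrix (Fin n) (Fin n) ℂ) (hH : H.IsHermitian)
    (ψ : Fin n → ℂ) (hψ : dotc ψ ψ = 1) :
    (∀ A : Matrix (Fin n) (Fin n) ℂ,
        0 ≤ (dotc ψ ((Aᴴ * (H * A - A * H)).mulVec ψ)).re) ↔
      H.mulVec ψ = (((⨅ i, hH.eigenvalues i : ℝ)) : ℂ) • ψ := by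
  classical
  have hne : Nonempty (Fin n) := ⟨⟨0, hn⟩⟩
  set lam : ℝ := ⨅ i, hH.eigenvalues i with hlam
  set U : Matrix (Fin n) (Fin n) ℂ := (hH.eigenvectorUnitary : Matrix (Fin n) (Fin n) ℂ)
    with hU
  have hUU : U * Uᴴ = 1 := by
    rw [← Matrix.star_eq_conjTranspose]
    exact (Matrix.mem_unitaryGroup_iff).mp hH.eigenvectorUnitary.2
  set M : Matrix (Fin n) (Fin n) ℂ := H - (lam : ℂ) • 1 with hMdef
  have hlam_le : ∀ i, lam ≤ hH.eigenvalues i := fun i =>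
    ciInf_le (Set.Finite.bddBelow (Set.finite_range _)) i
  -- M is positive semidefinite
  have hdecomp : M = U * (diagonal fun i => ((hH.eigenvalues i - lam : ℝ) : ℂ)) * Uᴴ := by
    have h1 : (diagonal fun i => ((hH.eigenvalues i - lam : ℝ) : ℂ)) =
        diagonal (RCLike.ofReal ∘ hH.eigenvalues) - (lam : ℂ) • 1 := by
      ext i j
      by_cases hij : i = j <;>
        simp [Matrix.diagonal_apply, Matrix.sub_apply, Matrix.smul_apply, Matrix.one_apply,
          hij, Complex.ofReal_sub]
    rw [h1, Matrix.mul_sub, Matrix.sub_mul, hMdef]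
    have h2 : U * ((lam : ℂ) • (1 : Matrix (Fin n) (Fin n) ℂ)) * Uᴴ
        = (lam : ℂ) • (1 : Matrix (Fin n) (Fin n) ℂ) := by
      rw [Matrix.mul_smul, Matrix.mul_one, Matrix.smul_mul, hUU]
    rw [h2]
    congr 1
    have := hH.spectral_theorem
    rw [Unitary.conjStarAlgAut_apply, Matrix.star_eq_conjTranspose] at this
    exact this
  have hPS : M.PosSemidef := by
    rw [hdecomp]
    refine Matrix.PosSemidef.mul_mul_conjTranspose_same ?_ _
    refine (Matrix.posSemidef_diagonal_iff).mpr fun i => ?_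
    rw [Complex.zero_le_real]
    linarith [hlam_le i]
  -- key rewriting of the quadratic form
  have key : ∀ A B : Matrix (Fin n) (Fin n) ℂ,
      dotc ψ ((Aᴴ * B).mulVec ψ) = star (A *ᵥ ψ) ⬝ᵥ (B *ᵥ ψ) := by
    intro A B
    rw [dotc_eq_star_dot, ← Matrix.mulVec_mulVec, Matrix.dotProduct_mulVec,
      ← Matrix.star_mulVec]
  have key2 : ∀ A : Matrix (Fin n) (Fin n) ℂ,
      dotc ψ ((Aᴴ * (H * A - A * H)).mulVec ψ)
        = star (A *ᵥ ψ) ⬝ᵥ (H *ᵥ (A *ᵥ ψ)) - star (A *ᵥ ψ) ⬝ᵥ (A *ᵥ (H *ᵥ ψ)) := by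
    intro A
    rw [key A (H * A - A * H), Matrix.sub_mulVec, dotProduct_sub,
      ← Matrix.mulVec_mulVec, ← Matrix.mulVec_mulVec]
  have hψ' : star ψ ⬝ᵥ ψ = 1 := hψ
  have hMv : ∀ u : Fin n → ℂ,
      star u ⬝ᵥ (M *ᵥ u) = star u ⬝ᵥ (H *ᵥ u) - (lam : ℂ) * (star u ⬝ᵥ u) := by
    intro u
    rw [hMdef, Matrix.sub_mulVec, dotProduct_sub, Matrix.smul_mulVec,
      Matrix.one_mulVec, dotProduct_smul, smul_eq_mul]
  constructor
  · intro hA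
    -- pick an eigenvector of the minimal eigenvalue
    obtain ⟨i0, hi0⟩ := exists_eq_ciInf_of_finite (f := hH.eigenvalues)
    set v : Fin n → ℂ := ⇑(hH.eigenvectorBasis i0) with hv
    have hv1 : star v ⬝ᵥ v = 1 := by
      have hnorm := hH.eigenvectorBasis.orthonormal.1 i0
      have h2 : (inner ℂ (hH.eigenvectorBasis i0) (hH.eigenvectorBasis i0) : ℂ) = 1 := by
        rw [inner_self_eq_norm_sq_to_K, hnorm]; norm_num
      rw [EuclideanSpace.inner_eq_star_dotProduct] at h2
      simpa [dotProduct_comm] using h2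
    have hHv : H *ᵥ v = (lam : ℂ) • v := by
      have := hH.mulVec_eigenvectorBasis i0
      rw [hv, this, hi0]
      funext j
      simp [Complex.real_smul, hlam]
    set A : Matrix (Fin n) (Fin n) ℂ := vecMulVec v (star ψ) with hA0
    have hmul : ∀ x : Fin n → ℂ, A *ᵥ x = (star ψ ⬝ᵥ x) • v := by
      intro x
      funext i
      simp only [hA0, Matrix.vecMulVec, Matrix.mulVec, dotProduct, Matrix.of_apply,
        Pi.smul_apply, smul_eq_mul]
      rw [Finset.sum_mul]
      exact Finset.sum_congr rfl fun j _ => by ring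
    have hAψ : A *ᵥ ψ = v := by rw [hmul, hψ', one_smul]
    set c : ℂ := star ψ ⬝ᵥ (H *ᵥ ψ) with hc
    have hEA : dotc ψ ((Aᴴ * (H * A - A * H)).mulVec ψ) = (lam : ℂ) - c := by
      rw [key2, hAψ, hHv, hmul (H *ᵥ ψ), ← hc, dotProduct_smul, dotProduct_smul,
        smul_eq_mul, smul_eq_mul, hv1, mul_one, mul_one]
    have h1 : 0 ≤ ((lam : ℂ) - c).re := by rw [← hEA]; exact hA A
    -- positivity gives the other inequality
    have h2 : (0 : ℂ) ≤ star ψ ⬝ᵥ (M *ᵥ ψ) := hPS.dotProduct_mulVec_nonneg ψ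
    have h3 : star ψ ⬝ᵥ (M *ᵥ ψ) = c - (lam : ℂ) := by
      rw [hMv, hψ', mul_one, hc]
    have h4 : star ψ ⬝ᵥ (M *ᵥ ψ) = 0 := by
      rw [h3]
      rw [h3] at h2
      rw [Complex.le_def] at h2
      apply Complex.ext
      · simp only [Complex.zero_re]
        have := h2.1
        simp only [Complex.zero_re] at this
        simp only [Complex.sub_re, Complex.ofReal_re, Complex.sub_im] at *
        have h1' : 0 ≤ lam - c.re := by simpa using h1
        linarith
      · simpa using h2.2.symm
    have h5 : M *ᵥ ψ = 0 := (hPS.dotProduct_mulVec_zero_iff ψ).mp h4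
    have : H *ᵥ ψ - (lam : ℂ) • ψ = 0 := by
      rw [← h5, hMdef, Matrix.sub_mulVec, Matrix.smul_mulVec, Matrix.one_mulVec]
    linear_combination (norm := module) this
  · intro h A
    set u : Fin n → ℂ := A *ᵥ ψ with hu
    have hE : dotc ψ ((Aᴴ * (H * A - A * H)).mulVec ψ) = star u ⬝ᵥ (M *ᵥ u) := by
      rw [key2, h, Matrix.mulVec_smul, dotProduct_smul, smul_eq_mul, hMv]
    rw [hE]
    have := hPS.dotProduct_mulVec_nonneg u
    rw [Complex.le_def] at this
    simpa using this.1
end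
end

section
/- Let H be a Hermitian n×n complex matrix with smallest eigenvalue λ_min, and let ρ be a density matrix (positive semidefinite with trace 1). Then Re Tr(ρ A*[H,A]) ≥ 0 for every n×n complex matrix A if and only if the range of ρ is contained in the eigenspace of H for the eigenvalue λ_min. In particular, the set of density matrices satisfying the local stability inequalities is a face of the convex set of all density matrices. -/
open Matrix ComplexOrder

noncomputable section


namespace DLS

variable {n : ℕ}

lemma star_single (i : Fin n) : star (Pi.single i (1:ℂ) : Fin n → ℂ) = Pi.single i 1 := by
  ext k
  by_cases h : k = i <;> simp [Pi.single_apply, h]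

lemma diag_nonneg {M : Matrix (Fin n) (Fin n) ℂ} (hM : M.PosSemidef) (i : Fin n) :
    0 ≤ M i i := by
  have := hM.dotProduct_mulVec_nonneg (Pi.single i 1)
  rwa [star_single, Matrix.mulVec_single_one, single_dotProduct, one_mul] at this

lemma mul_vecMulVec (M : Matrix (Fin n) (Fin n) ℂ) (w v : Fin n → ℂ) :
    M * vecMulVec w v = vecMulVec (M *ᵥ w) v := by
  ext i j
  simp [Matrix.mul_apply, Matrix.vecMulVec_apply, Matrix.mulVec, dotProduct,
    Finset.sum_mul, mul_assoc]

lemma vecMulVec_mul (M : Matrix (Fin n) (Fin n) ℂ) (w v : Fin n → ℂ) :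
    vecMulVec w v * M = vecMulVec w (v ᵥ* M) := by
  ext i j
  simp [Matrix.mul_apply, Matrix.vecMulVec_apply, Matrix.vecMul, dotProduct,
    Finset.mul_sum, mul_assoc]

lemma conjT_vecMulVec (w v : Fin n → ℂ) :
    (vecMulVec w v)ᴴ = vecMulVec (star v) (star w) := by
  ext i j
  simp [Matrix.conjTranspose_apply, Matrix.vecMulVec_apply, mul_comm]

lemma vecMulVec_mul_vecMulVec (w v w' v' : Fin n → ℂ) :
    vecMulVec w v * vecMulVec w' v' = (v ⬝ᵥ w') • vecMulVec w v' := by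
  ext i j
  simp only [Matrix.mul_apply, Matrix.vecMulVec_apply, Matrix.smul_apply,
    dotProduct, smul_eq_mul, Finset.sum_mul]
  exact Finset.sum_congr rfl fun k _ => by ring

lemma trace_vecMulVec (w v : Fin n → ℂ) :
    (vecMulVec w v).trace = v ⬝ᵥ w := by
  simp [Matrix.trace, Matrix.vecMulVec_apply, Matrix.diag, dotProduct, mul_comm]

/-- trace of a PSD matrix is nonneg (in the complex order). -/
lemma trace_nonneg {M : Matrix (Fin n) (Fin n) ℂ} (hM : M.PosSemidef) :
    0 ≤ M.trace :=
  Finset.sum_nonneg fun i _ => diag_nonneg hM i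

open scoped MatrixOrder in
lemma trace_PSD_mul_nonneg {P ρ : Matrix (Fin n) (Fin n) ℂ}
    (hP : P.PosSemidef) (hρ : ρ.PosSemidef) : 0 ≤ (P * ρ).trace := by
  obtain ⟨C, hC⟩ := CStarAlgebra.nonneg_iff_eq_star_mul_self.mp hρ.nonneg
  rw [Matrix.star_eq_conjTranspose] at hC
  have h1 : (P * ρ).trace = (C * P * Cᴴ).trace := by
    calc (P * ρ).trace = ((P * Cᴴ) * C).trace := by rw [hC]; simp only [Matrix.mul_assoc]
      _ = (C * (P * Cᴴ)).trace := Matrix.trace_mul_comm _ _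
      _ = (C * P * Cᴴ).trace := by simp only [Matrix.mul_assoc]
  rw [h1]
  exact trace_nonneg (hP.mul_mul_conjTranspose_same C)

open scoped MatrixOrder in
lemma PSD_mul_eq_zero_of_trace {P ρ : Matrix (Fin n) (Fin n) ℂ}
    (hP : P.PosSemidef) (hρ : ρ.PosSemidef) (h : (P * ρ).trace = 0) :
    P * ρ = 0 := by
  obtain ⟨C, hC⟩ := CStarAlgebra.nonneg_iff_eq_star_mul_self.mp hρ.nonneg
  obtain ⟨B, hB⟩ := CStarAlgebra.nonneg_iff_eq_star_mul_self.mp hP.nonneg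
  rw [Matrix.star_eq_conjTranspose] at hC hB
  have h1 : (P * ρ).trace = ((B * Cᴴ)ᴴ * (B * Cᴴ)).trace := by
    calc (P * ρ).trace = (Bᴴ * ((B * Cᴴ) * C)).trace := by
          rw [hB, hC]; simp only [Matrix.mul_assoc]
      _ = (((B * Cᴴ) * C) * Bᴴ).trace := Matrix.trace_mul_comm _ _
      _ = ((B * Cᴴ) * (C * Bᴴ)).trace := by simp only [Matrix.mul_assoc]
      _ = ((C * Bᴴ) * (B * Cᴴ)).trace := Matrix.trace_mul_comm _ _
      _ = ((B * Cᴴ)ᴴ * (B * Cᴴ)).trace := by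
          rw [Matrix.conjTranspose_mul, Matrix.conjTranspose_conjTranspose]
  have h2 : ((B * Cᴴ)ᴴ * (B * Cᴴ)).trace = 0 := by rw [← h1, h]
  have h3 : B * Cᴴ = 0 := by
    have hdiag : ∀ j, 0 ≤ ((B * Cᴴ)ᴴ * (B * Cᴴ)) j j :=
      fun j => diag_nonneg (Matrix.posSemidef_conjTranspose_mul_self (B * Cᴴ)) j
    have hz : ∀ j, ((B * Cᴴ)ᴴ * (B * Cᴴ)) j j = 0 := by
      have := (Finset.sum_eq_zero_iff_of_nonneg (fun j _ => hdiag j)).mp h2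
      intro j; exact this j (Finset.mem_univ j)
    have hcol : ∀ j, (fun i => (B * Cᴴ) i j) = 0 := by
      intro j
      apply dotProduct_star_self_eq_zero.mp
      have hd : ((B * Cᴴ)ᴴ * (B * Cᴴ)) j j
          = dotProduct (star fun i => (B * Cᴴ) i j) (fun i => (B * Cᴴ) i j) := by
        simp [Matrix.mul_apply, Matrix.conjTranspose_apply, dotProduct, mul_comm]
      rw [← hd]; exact hz j
    exact Matrix.ext fun i j => congrFun (hcol j) i
  rw [hB, hC, Matrix.mul_assoc, ← Matrix.mul_assoc B, h3]
  simp [Matrix.mul_assoc]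

end DLS

namespace DLS2
open DLS

variable {n : ℕ}

lemma stab_rank_one (H ρ : Matrix (Fin n) (Fin n) ℂ) (l : ℂ) (x : Fin n → ℂ)
    (hx : H *ᵥ x = l • x) (hx1 : star x ⬝ᵥ x = 1) (j : Fin n) :
    (ρ * ((vecMulVec x (Pi.single j (1:ℂ)))ᴴ *
        (H * (vecMulVec x (Pi.single j (1:ℂ))) -
          (vecMulVec x (Pi.single j (1:ℂ))) * H))).trace
      = l * ρ j j - (H * ρ) j j := by
  set v : Fin n → ℂ := Pi.single j (1:ℂ) with hv
  have hsv : star v = v := star_single j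
  have e1 : (vecMulVec x v)ᴴ = vecMulVec v (star x) := by
    rw [conjT_vecMulVec, hsv]
  have e2 : H * vecMulVec x v = vecMulVec (l • x) v := by
    rw [mul_vecMulVec, hx]
  have e3 : vecMulVec x v * H = vecMulVec x (v ᵥ* H) := DLS.vecMulVec_mul _ _ _
  rw [e1, e2, e3, Matrix.mul_sub, DLS.vecMulVec_mul_vecMulVec, DLS.vecMulVec_mul_vecMulVec,
    dotProduct_smul, hx1, Matrix.mul_sub, Matrix.trace_sub]
  have e4 : ∀ (u : Fin n → ℂ), (ρ * vecMulVec v u).trace = u ⬝ᵥ (ρ *ᵥ v) := by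
    intro u
    rw [mul_vecMulVec, trace_vecMulVec]
  rw [smul_eq_mul, mul_one, Matrix.mul_smul, Matrix.trace_smul, one_smul, e4, e4]
  have e5 : ρ *ᵥ v = fun i => ρ i j := by
    rw [hv, Matrix.mulVec_single]; simp; rfl
  have e6 : v ᵥ* H = fun k => H j k := by
    rw [hv, Matrix.single_vecMul]; simp; rfl
  rw [e5, e6]
  have e7 : (v ⬝ᵥ fun i => ρ i j) = ρ j j := by
    rw [hv, single_dotProduct, one_mul]
  have e8 : ((fun k => H j k) ⬝ᵥ fun i => ρ i j) = (H * ρ) j j := by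
    simp [Matrix.mul_apply, dotProduct]
  rw [e7, e8, smul_eq_mul]

lemma posSemidef_sub_smul (H : Matrix (Fin n) (Fin n) ℂ) (hH : H.IsHermitian)
    (l : ℝ) (hl : ∀ i, l ≤ hH.eigenvalues i) :
    (H - (l:ℂ) • 1).PosSemidef := by
  have hV : (hH.eigenvectorUnitary : Matrix (Fin n) (Fin n) ℂ) *
      star (hH.eigenvectorUnitary : Matrix (Fin n) (Fin n) ℂ) = 1 :=
    (Matrix.mem_unitaryGroup_iff).mp hH.eigenvectorUnitary.2
  have hdiag : Matrix.diagonal (fun i => ((hH.eigenvalues i - l : ℝ) : ℂ))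
      = Matrix.diagonal (RCLike.ofReal ∘ hH.eigenvalues) - (l:ℂ) • 1 := by
    ext i k
    by_cases h : i = k <;>
      simp [Matrix.diagonal_apply, Matrix.one_apply, h, Complex.ofReal_sub]
  have key : H - (l:ℂ) • 1
      = (hH.eigenvectorUnitary : Matrix (Fin n) (Fin n) ℂ) *
        Matrix.diagonal (fun i => ((hH.eigenvalues i - l : ℝ) : ℂ)) *
        (hH.eigenvectorUnitary : Matrix (Fin n) (Fin n) ℂ)ᴴ := by
    rw [hdiag, ← Matrix.star_eq_conjTranspose, Matrix.mul_sub, Matrix.sub_mul,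
      Matrix.mul_smul, Matrix.mul_one, Matrix.smul_mul, hV]
    conv_lhs => rw [hH.spectral_theorem, Unitary.conjStarAlgAut_apply]
  rw [key]
  refine (Matrix.posSemidef_diagonal_iff.mpr fun i => ?_).mul_mul_conjTranspose_same _
  rw [Complex.zero_le_real]
  linarith [hl i]

end DLS2

namespace DLS3
open DLS DLS2

variable {n : ℕ}

lemma stab_to_zero (H ρ : Matrix (Fin n) (Fin n) ℂ) (hH : H.IsHermitian)
    (hρ : ρ.PosSemidef) (hTr : ρ.trace = 1) (l : ℝ)
    (hl : ∀ i, l ≤ hH.eigenvalues i) (x : Fin n → ℂ)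
    (hx : H *ᵥ x = (l:ℂ) • x) (hx1 : star x ⬝ᵥ x = 1)
    (hstab : ∀ A : Matrix (Fin n) (Fin n) ℂ,
      0 ≤ ((ρ * (Aᴴ * (H * A - A * H))).trace).re) :
    (H - (l:ℂ) • 1) * ρ = 0 := by
  have hP : (H - (l:ℂ) • 1).PosSemidef := posSemidef_sub_smul H hH l hl
  have htr_nonneg : 0 ≤ ((H - (l:ℂ) • 1) * ρ).trace := trace_PSD_mul_nonneg hP hρ
  have hre : (((H - (l:ℂ) • 1) * ρ).trace).re ≤ 0 := by
    have hsum : ∀ j : Fin n, 0 ≤ ((l:ℂ) * ρ j j - (H * ρ) j j).re := fun j => by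
      have := hstab (vecMulVec x (Pi.single j (1:ℂ)))
      rwa [stab_rank_one H ρ (l:ℂ) x hx hx1 j] at this
    have hkey : ((H - (l:ℂ) • 1) * ρ).trace
        = -(∑ j, ((l:ℂ) * ρ j j - (H * ρ) j j)) := by
      have h1 : ∑ j, ((l:ℂ) * ρ j j - (H * ρ) j j)
          = (l:ℂ) * ρ.trace - (H * ρ).trace := by
        rw [Finset.sum_sub_distrib, ← Finset.mul_sum]; rfl
      rw [h1, Matrix.sub_mul, Matrix.trace_sub, Matrix.smul_mul, Matrix.one_mul,
        Matrix.trace_smul, hTr, smul_eq_mul]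
      ring
    rw [hkey, Complex.neg_re, Complex.re_sum]
    have := Finset.sum_nonneg (fun j (_ : j ∈ Finset.univ) => hsum j)
    linarith
  obtain ⟨h1, h2⟩ := Complex.nonneg_iff.mp htr_nonneg
  exact PSD_mul_eq_zero_of_trace hP hρ (Complex.ext (le_antisymm hre h1) h2.symm)

open scoped MatrixOrder in
lemma zero_to_stab (H ρ : Matrix (Fin n) (Fin n) ℂ) (hH : H.IsHermitian)
    (hρ : ρ.PosSemidef) (l : ℝ) (hl : ∀ i, l ≤ hH.eigenvalues i)
    (hzero : (H - (l:ℂ) • 1) * ρ = 0) :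
    ∀ A : Matrix (Fin n) (Fin n) ℂ,
      0 ≤ ((ρ * (Aᴴ * (H * A - A * H))).trace).re := by
  have hP : (H - (l:ℂ) • 1).PosSemidef := posSemidef_sub_smul H hH l hl
  have hHρ : H * ρ = (l:ℂ) • ρ := by
    rw [Matrix.sub_mul, sub_eq_zero, Matrix.smul_mul, Matrix.one_mul] at hzero
    exact hzero
  intro A
  set S : Matrix (Fin n) (Fin n) ℂ := CFC.sqrt ρ with hSdef
  have hS : S * S = ρ := CFC.sqrt_mul_sqrt_self ρ hρ.nonneg
  have hSh : Sᴴ = S := (CFC.sqrt_nonneg ρ).posSemidef.isHermitian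
  have t1 : (ρ * (Aᴴ * (H * A))).trace = ((A * S)ᴴ * (H * (A * S))).trace := by
    calc (ρ * (Aᴴ * (H * A))).trace
        = (S * (S * (Aᴴ * (H * A)))).trace := by
          rw [← hS]; simp only [Matrix.mul_assoc]
      _ = ((S * (Aᴴ * (H * A))) * S).trace := Matrix.trace_mul_comm _ _
      _ = ((A * S)ᴴ * (H * (A * S))).trace := by
          rw [Matrix.conjTranspose_mul, hSh]; simp only [Matrix.mul_assoc]
  have t2 : (ρ * (Aᴴ * (A * H))).trace = (l:ℂ) * ((A * S)ᴴ * (A * S)).trace := by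
    calc (ρ * (Aᴴ * (A * H))).trace
        = ((ρ * (Aᴴ * A)) * H).trace := by simp only [Matrix.mul_assoc]
      _ = (H * (ρ * (Aᴴ * A))).trace := Matrix.trace_mul_comm _ _
      _ = ((H * ρ) * (Aᴴ * A)).trace := by simp only [Matrix.mul_assoc]
      _ = (l:ℂ) * (ρ * (Aᴴ * A)).trace := by
          rw [hHρ, Matrix.smul_mul, Matrix.trace_smul, smul_eq_mul]
      _ = (l:ℂ) * ((A * S)ᴴ * (A * S)).trace := by
          congr 1
          calc (ρ * (Aᴴ * A)).trace
              = (S * (S * (Aᴴ * A))).trace := by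
                rw [← hS]; simp only [Matrix.mul_assoc]
            _ = ((S * (Aᴴ * A)) * S).trace := Matrix.trace_mul_comm _ _
            _ = ((A * S)ᴴ * (A * S)).trace := by
                rw [Matrix.conjTranspose_mul, hSh]; simp only [Matrix.mul_assoc]
  have key : (ρ * (Aᴴ * (H * A - A * H))).trace
      = ((A * S)ᴴ * ((H - (l:ℂ) • 1) * (A * S))).trace := by
    rw [Matrix.mul_sub, Matrix.mul_sub, Matrix.trace_sub, t1, t2,
      Matrix.sub_mul, Matrix.mul_sub, Matrix.trace_sub, Matrix.smul_mul,
      Matrix.one_mul, Matrix.mul_smul, Matrix.trace_smul, smul_eq_mul]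
  have hpsd : ((A * S)ᴴ * ((H - (l:ℂ) • 1) * (A * S))).PosSemidef := by
    have := hP.conjTranspose_mul_mul_same (A * S)
    rwa [Matrix.mul_assoc] at this
  have h0 : 0 ≤ ((A * S)ᴴ * ((H - (l:ℂ) • 1) * (A * S))).trace :=
    trace_nonneg hpsd
  rw [key]
  simpa using (Complex.le_def.mp h0).1

end DLS3

lemma zero_iff_range' (H ρ : Matrix (Fin n) (Fin n) ℂ) (l : ℝ) :
    (H - (l:ℂ) • 1) * ρ = 0 ↔
      LinearMap.range ρ.mulVecLin ≤ Module.End.eigenspace H.mulVecLin ((l:ℂ)) := by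
  constructor
  · intro h0
    have hHρ : H * ρ = (l:ℂ) • ρ := by
      rw [Matrix.sub_mul, sub_eq_zero, Matrix.smul_mul, Matrix.one_mul] at h0
      exact h0
    intro v hv
    obtain ⟨w, rfl⟩ := hv
    rw [Module.End.mem_eigenspace_iff]
    simp only [Matrix.mulVecLin_apply]
    rw [Matrix.mulVec_mulVec, hHρ, Matrix.smul_mulVec]
  · intro hr
    have hHρ : H * ρ = (l:ℂ) • ρ := by
      ext i k
      have hm := hr (LinearMap.mem_range_self ρ.mulVecLin (Pi.single k 1))
      rw [Module.End.mem_eigenspace_iff] at hm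
      simp only [Matrix.mulVecLin_apply] at hm
      rw [Matrix.mulVec_mulVec, Matrix.mulVec_single] at hm
      have h2 := congrFun hm i
      simpa using h2
    rw [Matrix.sub_mul, Matrix.smul_mul, Matrix.one_mul, hHρ, sub_self]


/-- Let `H` be a Hermitian `n×n` complex matrix with smallest eigenvalue
`λ_min`, and let `ρ` be a density matrix (positive semidefinite with trace 1). Then
`Re Tr(ρ A*[H,A]) ≥ 0` for every `n×n` complex matrix `A` if and only if the range
of `ρ` is contained in the eigenspace of `H` for the eigenvalue `λ_min`.
In particular, the set of density matrices satisfying the local stability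
inequalities is a face of the convex set of all density matrices. -/
theorem density_local_stability_iff_ground_range (n : ℕ) (hn : 0 < n)
    (H : Matrix (Fin n) (Fin n) ℂ) (hH : H.IsHermitian)
    (lmin : ℝ) (hlmin : lmin = ⨅ i, hH.eigenvalues i) :
    (∀ ρ : Matrix (Fin n) (Fin n) ℂ, ρ.PosSemidef → ρ.trace = 1 →
      ((∀ A : Matrix (Fin n) (Fin n) ℂ,
          0 ≤ ((ρ * (Aᴴ * (H * A - A * H))).trace).re) ↔
        LinearMap.range ρ.mulVecLin ≤
          Module.End.eigenspace H.mulVecLin ((lmin : ℂ)))) ∧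
    (∀ ρ₁ ρ₂ : Matrix (Fin n) (Fin n) ℂ,
      ρ₁.PosSemidef → ρ₁.trace = 1 → ρ₂.PosSemidef → ρ₂.trace = 1 →
      ∀ t : ℝ, 0 < t → t < 1 →
      (∀ A : Matrix (Fin n) (Fin n) ℂ,
          0 ≤ ((((t : ℂ) • ρ₁ + ((1 : ℂ) - (t : ℂ)) • ρ₂) *
                (Aᴴ * (H * A - A * H))).trace).re) →
        (∀ A : Matrix (Fin n) (Fin n) ℂ,
            0 ≤ ((ρ₁ * (Aᴴ * (H * A - A * H))).trace).re) ∧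
        (∀ A : Matrix (Fin n) (Fin n) ℂ,
            0 ≤ ((ρ₂ * (Aᴴ * (H * A - A * H))).trace).re)) := by
  have hne : Nonempty (Fin n) := ⟨⟨0, hn⟩⟩
  have hl : ∀ i, lmin ≤ hH.eigenvalues i := by
    intro i; rw [hlmin]
    exact ciInf_le (Set.Finite.bddBelow (Set.finite_range _)) i
  obtain ⟨i₀, -, hi₀⟩ := Finset.exists_min_image Finset.univ hH.eigenvalues
    ⟨⟨0, hn⟩, Finset.mem_univ _⟩
  have heq : hH.eigenvalues i₀ = lmin :=
    le_antisymm (by rw [hlmin]; exact le_ciInf fun j => hi₀ j (Finset.mem_univ j)) (hl i₀)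
  set x : Fin n → ℂ := ⇑(hH.eigenvectorBasis i₀) with hxdef
  have hx : H *ᵥ x = (lmin:ℂ) • x := by
    rw [hxdef, hH.mulVec_eigenvectorBasis, heq]
    ext i
    simp [Complex.real_smul]
  have hx1 : star x ⬝ᵥ x = 1 := by
    have h := (EuclideanSpace.inner_eq_star_dotProduct (𝕜 := ℂ)
      (hH.eigenvectorBasis i₀) (hH.eigenvectorBasis i₀)).symm
    rw [inner_self_eq_norm_sq_to_K, hH.eigenvectorBasis.orthonormal.1 i₀] at h
    rw [dotProduct_comm]
    simpa using h
  constructor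
  · intro ρ hρ hTr
    constructor
    · intro hstab
      exact (zero_iff_range' H ρ lmin).mp
        (DLS3.stab_to_zero H ρ hH hρ hTr lmin hl x hx hx1 hstab)
    · intro hr
      exact DLS3.zero_to_stab H ρ hH hρ lmin hl ((zero_iff_range' H ρ lmin).mpr hr)
  · intro ρ₁ ρ₂ hρ₁ hTr₁ hρ₂ hTr₂ t ht0 ht1 hstab
    have hts : ((1:ℂ) - (t:ℂ)) = ((1 - t : ℝ) : ℂ) := by push_cast; ring
    have hc1 : (0:ℂ) ≤ (t:ℂ) := Complex.zero_le_real.mpr ht0.le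
    have hc2 : (0:ℂ) ≤ ((1:ℂ) - (t:ℂ)) := by
      rw [hts]; exact Complex.zero_le_real.mpr (by linarith)
    set σ : Matrix (Fin n) (Fin n) ℂ := (t:ℂ) • ρ₁ + ((1:ℂ) - (t:ℂ)) • ρ₂ with hσdef
    have hσ : σ.PosSemidef := by
      refine Matrix.PosSemidef.of_dotProduct_mulVec_nonneg ?_ ?_
      · show σᴴ = σ
        rw [hσdef, Matrix.conjTranspose_add, Matrix.conjTranspose_smul,
          Matrix.conjTranspose_smul, hρ₁.1.eq, hρ₂.1.eq, hts]
        rw [Complex.star_def, Complex.conj_ofReal, Complex.conj_ofReal]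
      · intro v
        have h1 := hρ₁.dotProduct_mulVec_nonneg v
        have h2 := hρ₂.dotProduct_mulVec_nonneg v
        rw [hσdef, Matrix.add_mulVec, Matrix.smul_mulVec, Matrix.smul_mulVec,
          dotProduct_add, dotProduct_smul, dotProduct_smul,
          smul_eq_mul, smul_eq_mul]
        exact add_nonneg (mul_nonneg hc1 h1) (mul_nonneg hc2 h2)
    have hσTr : σ.trace = 1 := by
      rw [hσdef, Matrix.trace_add, Matrix.trace_smul, Matrix.trace_smul, hTr₁, hTr₂]
      simp
    have hz : (H - (lmin:ℂ) • 1) * σ = 0 :=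
      DLS3.stab_to_zero H σ hH hσ hσTr lmin hl x hx hx1 hstab
    have hP : (H - (lmin:ℂ) • 1).PosSemidef := DLS2.posSemidef_sub_smul H hH lmin hl
    have ha : 0 ≤ ((H - (lmin:ℂ) • 1) * ρ₁).trace := DLS.trace_PSD_mul_nonneg hP hρ₁
    have hb : 0 ≤ ((H - (lmin:ℂ) • 1) * ρ₂).trace := DLS.trace_PSD_mul_nonneg hP hρ₂
    have hsplit : (H - (lmin:ℂ) • 1) * σ
        = (t:ℂ) • ((H - (lmin:ℂ) • 1) * ρ₁) + ((1:ℂ) - (t:ℂ)) • ((H - (lmin:ℂ) • 1) * ρ₂) := by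
      rw [hσdef, Matrix.mul_add, Matrix.mul_smul, Matrix.mul_smul]
    have hsumz : (t:ℂ) * ((H - (lmin:ℂ) • 1) * ρ₁).trace
        + ((1:ℂ) - (t:ℂ)) * ((H - (lmin:ℂ) • 1) * ρ₂).trace = 0 := by
      have := congrArg Matrix.trace hsplit
      rw [hz, Matrix.trace_zero, Matrix.trace_add, Matrix.trace_smul, Matrix.trace_smul,
        smul_eq_mul, smul_eq_mul] at this
      exact this.symm
    have hta : 0 ≤ (t:ℂ) * ((H - (lmin:ℂ) • 1) * ρ₁).trace := mul_nonneg hc1 ha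
    have htb : 0 ≤ ((1:ℂ) - (t:ℂ)) * ((H - (lmin:ℂ) • 1) * ρ₂).trace := mul_nonneg hc2 hb
    have h1z : ((H - (lmin:ℂ) • 1) * ρ₁).trace = 0 := by
      have hz1 : (t:ℂ) * ((H - (lmin:ℂ) • 1) * ρ₁).trace = 0 := by
        refine le_antisymm ?_ hta
        calc (t:ℂ) * ((H - (lmin:ℂ) • 1) * ρ₁).trace
            ≤ (t:ℂ) * ((H - (lmin:ℂ) • 1) * ρ₁).trace
              + ((1:ℂ) - (t:ℂ)) * ((H - (lmin:ℂ) • 1) * ρ₂).trace :=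
              le_add_of_nonneg_right htb
          _ = 0 := hsumz
      rcases mul_eq_zero.mp hz1 with h | h
      · exact absurd h (by exact_mod_cast ne_of_gt ht0)
      · exact h
    have h2z : ((H - (lmin:ℂ) • 1) * ρ₂).trace = 0 := by
      have hz2 : ((1:ℂ) - (t:ℂ)) * ((H - (lmin:ℂ) • 1) * ρ₂).trace = 0 := by
        refine le_antisymm ?_ htb
        calc ((1:ℂ) - (t:ℂ)) * ((H - (lmin:ℂ) • 1) * ρ₂).trace
            ≤ (t:ℂ) * ((H - (lmin:ℂ) • 1) * ρ₁).trace
              + ((1:ℂ) - (t:ℂ)) * ((H - (lmin:ℂ) • 1) * ρ₂).trace :=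
              le_add_of_nonneg_left hta
          _ = 0 := hsumz
      rcases mul_eq_zero.mp hz2 with h | h
      · refine absurd h ?_
        rw [hts]
        exact_mod_cast ne_of_gt (by linarith : (0:ℝ) < 1 - t)
      · exact h
    exact ⟨DLS3.zero_to_stab H ρ₁ hH hρ₁ lmin hl
        (DLS.PSD_mul_eq_zero_of_trace hP hρ₁ h1z),
      DLS3.zero_to_stab H ρ₂ hH hρ₂ lmin hl
        (DLS.PSD_mul_eq_zero_of_trace hP hρ₂ h2z)⟩
end
end

section
/- For every q ∈ (0,1) and every L ≥ 1, the kernel of the finite XXZ kink chain Hamiltonian H_L equals the linear span of the family of kink product vectors {φ(z) : z ∈ ℂ}; equivalently, every zero-energy vector of H_L is a linear combination of the vectors φ(z), and this span coincides with the span of the sector vectors ψ_k, k = 0,…,L+1, and has dimension L+2. -/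
open Matrix Kronecker ComplexOrder

noncomputable section

set_option linter.unusedSectionVars false
set_option maxHeartbeats 1000000

namespace XXZAux

open Finset

section UpdateLemmas

variable {ι : Type*} [Fintype ι] [DecidableEq ι]

lemma upd_a {a b : ι} (hab : a ≠ b) (σ : ι → Fin 2) (s t : Fin 2) :
    Function.update (Function.update σ a s) b t a = s := by
  rw [Function.update_of_ne hab, Function.update_self]

lemma upd_b {a b : ι} (σ : ι → Fin 2) (s t : Fin 2) :
    Function.update (Function.update σ a s) b t b = t := Function.update_self _ _ _

lemma upd_off {a b y : ι} (hya : y ≠ a) (hyb : y ≠ b) (σ : ι → Fin 2) (s t : Fin 2) :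
    Function.update (Function.update σ a s) b t y = σ y := by
  rw [Function.update_of_ne hyb, Function.update_of_ne hya]

lemma upd_absorb {a b : ι} (hab : a ≠ b) (σ : ι → Fin 2) (s t u w : Fin 2) :
    Function.update (Function.update (Function.update (Function.update σ a s) b t) a u) b w
      = Function.update (Function.update σ a u) b w := by
  funext y
  rcases eq_or_ne y b with rfl | hyb
  · simp
  · rcases eq_or_ne y a with rfl | hya
    · rw [Function.update_of_ne hab, Function.update_self,
        Function.update_of_ne hab, Function.update_self]
    · rw [upd_off hya hyb, upd_off hya hyb, upd_off hya hyb]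

lemma agree_elem {a b : ι} (hab : a ≠ b) (σ τ : ι → Fin 2)
    (h : ∀ y, y ≠ a → y ≠ b → σ y = τ y) :
    Function.update (Function.update σ a (τ a)) b (τ b) = τ := by
  funext y
  rcases eq_or_ne y b with rfl | hyb
  · exact upd_b σ _ _
  · rcases eq_or_ne y a with rfl | hya
    · exact upd_a hab σ _ _
    · rw [upd_off hya hyb]; exact h y hya hyb

lemma sum_agree {a b : ι} (hab : a ≠ b) (σ : ι → Fin 2) (f : (ι → Fin 2) → ℂ) :
    ∑ τ : ι → Fin 2, (if ∀ y, y ≠ a → y ≠ b → σ y = τ y then 1 else 0) * f τ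
      = ∑ p : Fin 2 × Fin 2, f (Function.update (Function.update σ a p.1) b p.2) := by
  have h1 : ∀ τ : ι → Fin 2,
      (if ∀ y, y ≠ a → y ≠ b → σ y = τ y then (1:ℂ) else 0) * f τ
      = if ∀ y, y ≠ a → y ≠ b → σ y = τ y then f τ else 0 := by
    intro τ; split <;> simp
  simp only [h1]
  rw [← Finset.sum_filter]
  refine Finset.sum_nbij' (fun τ => (τ a, τ b))
    (fun p => Function.update (Function.update σ a p.1) b p.2) ?_ ?_ ?_ ?_ ?_
  · intro τ _; exact Finset.mem_univ _
  · intro p _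
    simp only [Finset.mem_filter, Finset.mem_univ, true_and]
    intro y hya hyb
    rw [upd_off hya hyb]
  · intro τ hτ
    simp only [Finset.mem_filter, Finset.mem_univ, true_and] at hτ
    exact agree_elem hab σ τ hτ
  · intro p _
    simp [upd_a hab, upd_b]
  · intro τ hτ
    simp only [Finset.mem_filter, Finset.mem_univ, true_and] at hτ
    rw [agree_elem hab σ τ hτ]

lemma sum_update_double (a : ι) (F : (ι → Fin 2) → ℂ) :
    ∑ s : Fin 2, ∑ σ : ι → Fin 2, F (Function.update σ a s)
      = 2 * ∑ σ : ι → Fin 2, F σ := by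
  classical
  set e := Equiv.funSplitAt a (Fin 2) with he
  have key : ∀ (s t : Fin 2) (r : {j // j ≠ a} → Fin 2),
      Function.update (e.symm (t, r)) a s = e.symm (s, r) := by
    intro s t r
    funext y
    rcases eq_or_ne y a with rfl | hy
    · simp [he, Equiv.funSplitAt, Equiv.piSplitAt]
    · simp [Function.update_of_ne hy, he, Equiv.funSplitAt, Equiv.piSplitAt, hy]
  have base : ∀ (G : (ι → Fin 2) → ℂ),
      ∑ σ : ι → Fin 2, G σ = ∑ p : Fin 2 × ({j // j ≠ a} → Fin 2), G (e.symm p) :=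
    fun G => (Fintype.sum_equiv e.symm _ _ fun p => rfl).symm
  calc ∑ s : Fin 2, ∑ σ : ι → Fin 2, F (Function.update σ a s)
      = ∑ s : Fin 2, ∑ p : Fin 2 × ({j // j ≠ a} → Fin 2), F (Function.update (e.symm p) a s) := by
        refine Finset.sum_congr rfl fun s _ => base _
    _ = ∑ s : Fin 2, ∑ t : Fin 2, ∑ r : {j // j ≠ a} → Fin 2, F (e.symm (s, r)) := by
        refine Finset.sum_congr rfl fun s _ => ?_
        rw [Fintype.sum_prod_type]
        exact Finset.sum_congr rfl fun t _ => Finset.sum_congr rfl fun r _ => by rw [key]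
    _ = ∑ s : Fin 2, 2 * ∑ r : {j // j ≠ a} → Fin 2, F (e.symm (s, r)) := by
        refine Finset.sum_congr rfl fun s _ => ?_
        rw [Finset.sum_const, Finset.card_univ, Fintype.card_fin, two_smul, two_mul]
    _ = 2 * ∑ σ : ι → Fin 2, F σ := by
        rw [base F, Fintype.sum_prod_type, Finset.mul_sum]

lemma sum_update_quad {a b : ι} (hab : a ≠ b) (F : (ι → Fin 2) → ℂ) :
    ∑ p : Fin 2 × Fin 2, ∑ σ : ι → Fin 2,
        F (Function.update (Function.update σ a p.1) b p.2)
      = 4 * ∑ σ : ι → Fin 2, F σ := by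
  rw [Fintype.sum_prod_type]
  have step : ∀ s : Fin 2,
      ∑ t : Fin 2, ∑ σ : ι → Fin 2, F (Function.update (Function.update σ a s) b t)
        = 2 * ∑ σ : ι → Fin 2, F (Function.update σ a s) := by
    intro s
    have : ∀ (t : Fin 2) (σ : ι → Fin 2),
        F (Function.update (Function.update σ a s) b t)
          = (fun τ => F (Function.update τ a s)) (Function.update σ b t) := by
      intro t σ
      simp only
      rw [Function.update_comm hab]
    simp only [this]
    exact sum_update_double b (fun τ => F (Function.update τ a s))
  calc ∑ s : Fin 2, ∑ t : Fin 2, ∑ σ : ι → Fin 2, F (Function.update (Function.update σ a s) b t)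
      = ∑ s : Fin 2, 2 * ∑ σ : ι → Fin 2, F (Function.update σ a s) := Finset.sum_congr rfl fun s _ => step s
    _ = 2 * ∑ s : Fin 2, ∑ σ : ι → Fin 2, F (Function.update σ a s) := by rw [Finset.mul_sum]
    _ = 4 * ∑ σ : ι → Fin 2, F σ := by rw [sum_update_double a F]; ring

end UpdateLemmas

end XXZAux

namespace XXZAux

open Finset Matrix

/-- The vector `ξ = |↑↓⟩ − q|↓↑⟩` (as a function on `Fin 2 × Fin 2`). -/
def xiV (q : ℝ) : Fin 2 × Fin 2 → ℂ :=
  fun p => if p = (0,1) then 1 else if p = (1,0) then -(q:ℂ) else 0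

lemma xiV01 (q : ℝ) : xiV q (0,1) = 1 := by
  simp [xiV]
lemma xiV10 (q : ℝ) : xiV q (1,0) = -(q:ℂ) := by
  simp only [xiV]; rw [if_neg (by decide)]; simp
lemma xiV00 (q : ℝ) : xiV q (0,0) = 0 := by
  simp only [xiV]; rw [if_neg (by decide), if_neg (by decide)]
lemma xiV11 (q : ℝ) : xiV q (1,1) = 0 := by
  simp only [xiV]; rw [if_neg (by decide), if_neg (by decide)]

lemma one_add_q_sq_ne (q : ℝ) (hq : 0 < q) : (1 + (q:ℂ)^2) ≠ 0 := by
  have : ((1 + q^2 : ℝ) : ℂ) ≠ 0 := by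
    rw [Complex.ofReal_ne_zero]; nlinarith
  simpa using this

lemma hKink_apply (q : ℝ) (hq : 0 < q) (p r : Fin 2 × Fin 2) :
    hKink q p r = (1 + (q:ℂ)^2)⁻¹ * (xiV q p * xiV q r) := by
  have hq0 : (q:ℂ) ≠ 0 := by exact_mod_cast hq.ne'
  have h1 : (1 + (q:ℂ)^2) ≠ 0 := one_add_q_sq_ne q hq
  have hD : ((Delta q : ℝ) : ℂ) = ((q:ℂ) + (q:ℂ)⁻¹)/2 := by
    unfold Delta; push_cast; ring
  have hB : ((Bfield q : ℝ) : ℂ) = (1 - (q:ℂ)^2) / (2*(1 + (q:ℂ)^2)) := by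
    unfold Bfield; push_cast; ring
  obtain ⟨i, j⟩ := p
  obtain ⟨k, l⟩ := r
  fin_cases i <;> fin_cases j <;> fin_cases k <;> fin_cases l <;>
    · simp only [hKink, S1, S2, S3, xiV, Matrix.add_apply, Matrix.sub_apply,
        Matrix.smul_apply, Matrix.kroneckerMap_apply, Matrix.one_apply, hD, hB,
        Matrix.cons_val', Matrix.cons_val_zero, Matrix.cons_val_one, Matrix.head_cons,
        Matrix.head_fin_const, Matrix.empty_val', Matrix.cons_val_fin_one, smul_eq_mul,
        if_true, Prod.mk.injEq]
      norm_num
      try field_simp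
      try ring_nf
      try simp [Complex.I_sq]
      try ring

section ChainLemmas

variable {ι : Type*} [Fintype ι] [DecidableEq ι]

/-- The local kernel functional `G_{a,b} v (σ) = v(σ[a↑,b↓]) − q v(σ[a↓,b↑])`. -/
def GF (q : ℝ) (v : (ι → Fin 2) → ℂ) (a b : ι) (σ : ι → Fin 2) : ℂ :=
  v (Function.update (Function.update σ a 0) b 1)
    - q * v (Function.update (Function.update σ a 1) b 0)

lemma GF_absorb (q : ℝ) (v : (ι → Fin 2) → ℂ) {a b : ι} (hab : a ≠ b)
    (σ : ι → Fin 2) (s t : Fin 2) :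
    GF q v a b (Function.update (Function.update σ a s) b t) = GF q v a b σ := by
  unfold GF
  rw [upd_absorb hab, upd_absorb hab]

lemma twoSiteOp_mulVec (M : Matrix (Fin 2 × Fin 2) (Fin 2 × Fin 2) ℂ) {a b : ι}
    (hab : a ≠ b) (v : (ι → Fin 2) → ℂ) (σ : ι → Fin 2) :
    (twoSiteOp M a b).mulVec v σ
      = ∑ p : Fin 2 × Fin 2, M (σ a, σ b) p
          * v (Function.update (Function.update σ a p.1) b p.2) := by
  unfold Matrix.mulVec twoSiteOp dotProduct
  have h1 : ∀ τ : ι → Fin 2,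
      M (σ a, σ b) (τ a, τ b) * (if ∀ y, y ≠ a → y ≠ b → σ y = τ y then (1:ℂ) else 0) * v τ
      = (if ∀ y, y ≠ a → y ≠ b → σ y = τ y then (1:ℂ) else 0)
          * (M (σ a, σ b) (τ a, τ b) * v τ) := by
    intro τ; ring
  simp only [h1]
  rw [sum_agree hab σ (fun τ => M (σ a, σ b) (τ a, τ b) * v τ)]
  refine Finset.sum_congr rfl fun p _ => ?_
  rw [upd_a hab, upd_b]

/-- Lemma A: action of a two-site kink term. -/
lemma kink_mulVec (q : ℝ) (hq : 0 < q) {a b : ι} (hab : a ≠ b)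
    (v : (ι → Fin 2) → ℂ) (σ : ι → Fin 2) :
    (twoSiteOp (hKink q) a b).mulVec v σ
      = (1 + (q:ℂ)^2)⁻¹ * (xiV q (σ a, σ b) * GF q v a b σ) := by
  rw [twoSiteOp_mulVec _ hab]
  simp only [hKink_apply q hq]
  rw [Fintype.sum_prod_type]
  simp only [Fin.sum_univ_two]
  rw [xiV00, xiV01, xiV10, xiV11]
  unfold GF
  ring

/-- The four-term expansion of the conjugate of `GF`. -/
lemma conj_GF (q : ℝ) (v : (ι → Fin 2) → ℂ) (a b : ι) (σ : ι → Fin 2) :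
    ∑ p : Fin 2 × Fin 2, xiV q p
        * (starRingEnd ℂ) (v (Function.update (Function.update σ a p.1) b p.2))
      = (starRingEnd ℂ) (GF q v a b σ) := by
  rw [Fintype.sum_prod_type]
  simp only [Fin.sum_univ_two]
  rw [xiV00, xiV01, xiV10, xiV11]
  unfold GF
  rw [map_sub, _root_.map_mul, Complex.conj_ofReal]
  ring

/-- Lemma C: the quadratic form of a two-site kink term. -/
lemma kink_quadform (q : ℝ) (hq : 0 < q) {a b : ι} (hab : a ≠ b)
    (v : (ι → Fin 2) → ℂ) :
    star v ⬝ᵥ (twoSiteOp (hKink q) a b).mulVec v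
      = (1 + (q:ℂ)^2)⁻¹ * (4:ℂ)⁻¹
          * ∑ σ : ι → Fin 2, (Complex.normSq (GF q v a b σ) : ℂ) := by
  unfold dotProduct
  have h1 : ∀ σ : ι → Fin 2,
      star v σ * (twoSiteOp (hKink q) a b).mulVec v σ
        = (1 + (q:ℂ)^2)⁻¹ * ((starRingEnd ℂ) (v σ) * xiV q (σ a, σ b) * GF q v a b σ) := by
    intro σ
    rw [kink_mulVec q hq hab]
    simp only [Pi.star_apply, RCLike.star_def]
    ring
  simp only [h1]
  rw [← Finset.mul_sum]
  set F : (ι → Fin 2) → ℂ :=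
    fun σ => (starRingEnd ℂ) (v σ) * xiV q (σ a, σ b) * GF q v a b σ with hF
  have h4 : (4:ℂ) * ∑ σ, F σ = ∑ σ : ι → Fin 2, (Complex.normSq (GF q v a b σ) : ℂ) := by
    rw [← sum_update_quad hab F, Finset.sum_comm]
    refine Finset.sum_congr rfl fun σ _ => ?_
    have : ∀ p : Fin 2 × Fin 2,
        F (Function.update (Function.update σ a p.1) b p.2)
          = (xiV q p * (starRingEnd ℂ) (v (Function.update (Function.update σ a p.1) b p.2)))
              * GF q v a b σ := by
      intro p
      rw [hF]
      simp only
      rw [upd_a hab, upd_b, GF_absorb q v hab]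
      ring
    simp only [this]
    rw [← Finset.sum_mul, conj_GF]
    rw [mul_comm, Complex.mul_conj]
  linear_combination (1 + (q:ℂ)^2)⁻¹ * (4:ℂ)⁻¹ * h4

end ChainLemmas

end XXZAux

namespace XXZAux

open Finset Matrix

section FilterLemmas

variable {ι : Type*} [Fintype ι] [DecidableEq ι]

lemma fin2_ne : (0 : Fin 2) ≠ 1 := by decide

lemma filter_upd01 {a b : ι} (hab : a ≠ b) (σ : ι → Fin 2) :
    (Finset.univ.filter fun y => Function.update (Function.update σ a 0) b 1 y = 1)
      = insert b ((Finset.univ.filter fun y => σ y = 1) \ {a, b}) := by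
  ext y
  simp only [Finset.mem_filter, Finset.mem_univ, true_and, Finset.mem_insert,
    Finset.mem_sdiff, Finset.mem_singleton]
  rcases eq_or_ne y b with rfl | hyb
  · simp [upd_b]
  · rcases eq_or_ne y a with rfl | hya
    · simp [upd_a hab, hab, hyb, fin2_ne]
    · simp [upd_off hya hyb, hya, hyb]

lemma filter_upd10 {a b : ι} (hab : a ≠ b) (σ : ι → Fin 2) :
    (Finset.univ.filter fun y => Function.update (Function.update σ a 1) b 0 y = 1)
      = insert a ((Finset.univ.filter fun y => σ y = 1) \ {a, b}) := by
  ext y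
  simp only [Finset.mem_filter, Finset.mem_univ, true_and, Finset.mem_insert,
    Finset.mem_sdiff, Finset.mem_singleton]
  rcases eq_or_ne y b with rfl | hyb
  · simp [upd_b, hab.symm, fin2_ne.symm]
  · rcases eq_or_ne y a with rfl | hya
    · simp [upd_a hab, hab, hyb]
    · simp [upd_off hya hyb, hya, hyb]

lemma a_not_mem_E {a b : ι} (σ : ι → Fin 2) :
    a ∉ (Finset.univ.filter fun y => σ y = 1) \ {a, b} := by simp
lemma b_not_mem_E {a b : ι} (σ : ι → Fin 2) :
    b ∉ (Finset.univ.filter fun y => σ y = 1) \ {a, b} := by simp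

end FilterLemmas

section Sector

variable {L : ℕ}

/-- number of down spins -/
def kC (σ : Fin (L+1) → Fin 2) : ℕ := (Finset.univ.filter fun y => σ y = 1).card

/-- sum of positions of down spins -/
def sS (σ : Fin (L+1) → Fin 2) : ℕ :=
  ∑ y ∈ Finset.univ.filter (fun y => σ y = 1), (y : ℕ)

lemma psi_eq (q : ℝ) (k : ℕ) (σ : Fin (L+1) → Fin 2) :
    psiSector L q k σ = if kC σ = k then (q:ℂ)^(sS σ) else 0 := rfl

lemma kC_le (σ : Fin (L+1) → Fin 2) : kC σ ≤ L + 1 := by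
  have := Finset.card_filter_le (Finset.univ : Finset (Fin (L+1))) (fun y => σ y = 1)
  simpa [kC] using this

lemma cs_ne_succ (x : Fin L) : (x.castSucc : Fin (L+1)) ≠ x.succ :=
  (Fin.castSucc_lt_succ : x.castSucc < x.succ).ne

/-- statistics of the two updated configurations -/
lemma stats_upd (x : Fin L) (σ : Fin (L+1) → Fin 2) :
    kC (Function.update (Function.update σ x.castSucc 0) x.succ 1)
        = ((Finset.univ.filter fun y => σ y = 1) \ {x.castSucc, x.succ}).card + 1
    ∧ kC (Function.update (Function.update σ x.castSucc 1) x.succ 0)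
        = ((Finset.univ.filter fun y => σ y = 1) \ {x.castSucc, x.succ}).card + 1
    ∧ sS (Function.update (Function.update σ x.castSucc 0) x.succ 1)
        = ((x:ℕ) + 1) + ∑ y ∈ (Finset.univ.filter fun y => σ y = 1) \ {x.castSucc, x.succ}, (y:ℕ)
    ∧ sS (Function.update (Function.update σ x.castSucc 1) x.succ 0)
        = (x:ℕ) + ∑ y ∈ (Finset.univ.filter fun y => σ y = 1) \ {x.castSucc, x.succ}, (y:ℕ) := by
  have hab := cs_ne_succ x
  constructor
  · rw [kC, filter_upd01 hab, Finset.card_insert_of_notMem (b_not_mem_E σ)]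
  constructor
  · rw [kC, filter_upd10 hab, Finset.card_insert_of_notMem (a_not_mem_E σ)]
  constructor
  · rw [sS, filter_upd01 hab, Finset.sum_insert (b_not_mem_E σ)]
    simp [Fin.val_succ]
  · rw [sS, filter_upd10 hab, Finset.sum_insert (a_not_mem_E σ)]
    simp

/-- the sector vectors are in the local kernels -/
lemma GF_psi (q : ℝ) (hq : 0 < q) (k : ℕ) (x : Fin L) (σ : Fin (L+1) → Fin 2) :
    GF q (psiSector L q k) x.castSucc x.succ σ = 0 := by
  obtain ⟨h1, h2, h3, h4⟩ := stats_upd x σ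
  unfold GF
  rw [psi_eq, psi_eq, h1, h2, h3, h4]
  split
  · rw [show ((x:ℕ) + 1) + ∑ y ∈ (Finset.univ.filter fun y => σ y = 1) \ {x.castSucc, x.succ}, (y:ℕ)
        = ((x:ℕ) + ∑ y ∈ (Finset.univ.filter fun y => σ y = 1) \ {x.castSucc, x.succ}, (y:ℕ)) + 1 by omega,
      pow_succ]
    ring
  · ring

end Sector

end XXZAux

namespace XXZAux

open Finset Matrix

lemma sum_mulVec' {n : Type*} [Fintype n] {κ : Type*} (s : Finset κ)
    (M : κ → Matrix n n ℂ) (v : n → ℂ) :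
    (∑ i ∈ s, M i).mulVec v = ∑ i ∈ s, (M i).mulVec v := by
  funext σ
  unfold Matrix.mulVec dotProduct
  rw [Finset.sum_apply]
  simp only [Matrix.sum_apply, Finset.sum_mul]
  exact Finset.sum_comm

lemma dot_sum {n : Type*} [Fintype n] {κ : Type*} (u : n → ℂ) (s : Finset κ)
    (w : κ → n → ℂ) : u ⬝ᵥ (∑ i ∈ s, w i) = ∑ i ∈ s, u ⬝ᵥ w i := by
  unfold dotProduct
  simp only [Finset.sum_apply, Finset.mul_sum]
  exact Finset.sum_comm

variable {L : ℕ}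

lemma HChain_mulVec (q : ℝ) (hq : 0 < q) (v : (Fin (L+1) → Fin 2) → ℂ)
    (σ : Fin (L+1) → Fin 2) :
    (HChain L q).mulVec v σ
      = ∑ x : Fin L, (1 + (q:ℂ)^2)⁻¹
          * (xiV q (σ x.castSucc, σ x.succ) * GF q v x.castSucc x.succ σ) := by
  rw [HChain, sum_mulVec', Finset.sum_apply]
  exact Finset.sum_congr rfl fun x _ => kink_mulVec q hq (cs_ne_succ x) v σ

/-- If all the local functionals vanish then `v` is in the kernel. -/
lemma mulVec_eq_zero_of_GF (q : ℝ) (hq : 0 < q) (v : (Fin (L+1) → Fin 2) → ℂ)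
    (h : ∀ (x : Fin L) (σ : Fin (L+1) → Fin 2), GF q v x.castSucc x.succ σ = 0) :
    (HChain L q).mulVec v = 0 := by
  funext σ
  rw [HChain_mulVec q hq]
  simp [h]

/-- If `v` is in the kernel then all the local functionals vanish. -/
lemma GF_eq_zero_of_mulVec (q : ℝ) (hq : 0 < q) (v : (Fin (L+1) → Fin 2) → ℂ)
    (h : (HChain L q).mulVec v = 0) (x : Fin L) (σ : Fin (L+1) → Fin 2) :
    GF q v x.castSucc x.succ σ = 0 := by
  have hdot : star v ⬝ᵥ (HChain L q).mulVec v = 0 := by rw [h, dotProduct_zero]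
  rw [HChain, sum_mulVec', dot_sum] at hdot
  have hterm : ∀ y : Fin L,
      star v ⬝ᵥ (twoSiteOp (hKink q) y.castSucc y.succ).mulVec v
        = (1 + (q:ℂ)^2)⁻¹ * (4:ℂ)⁻¹
            * ∑ σ' : Fin (L+1) → Fin 2, (Complex.normSq (GF q v y.castSucc y.succ σ') : ℂ) :=
    fun y => kink_quadform q hq (cs_ne_succ y) v
  simp only [hterm] at hdot
  rw [← Finset.mul_sum] at hdot
  have hc : ((1 + (q:ℂ)^2)⁻¹ * (4:ℂ)⁻¹) ≠ 0 := by
    apply mul_ne_zero (inv_ne_zero (one_add_q_sq_ne q hq)) (by norm_num)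
  have hsum : ∑ y : Fin L, ∑ σ' : Fin (L+1) → Fin 2,
      (Complex.normSq (GF q v y.castSucc y.succ σ') : ℂ) = 0 :=
    (mul_eq_zero.mp hdot).resolve_left hc
  have hsumR : ∑ y : Fin L, ∑ σ' : Fin (L+1) → Fin 2,
      Complex.normSq (GF q v y.castSucc y.succ σ') = 0 := by
    have := hsum
    push_cast at this
    exact_mod_cast this
  have h1 : ∀ y : Fin L, ∀ σ' : Fin (L+1) → Fin 2,
      Complex.normSq (GF q v y.castSucc y.succ σ') = 0 := by
    intro y σ'
    have hnn : ∀ y ∈ (Finset.univ : Finset (Fin L)),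
        0 ≤ ∑ σ' : Fin (L+1) → Fin 2, Complex.normSq (GF q v y.castSucc y.succ σ') :=
      fun y _ => Finset.sum_nonneg fun _ _ => Complex.normSq_nonneg _
    have hy := (Finset.sum_eq_zero_iff_of_nonneg hnn).mp hsumR y (Finset.mem_univ y)
    have hnn2 : ∀ σ' ∈ (Finset.univ : Finset (Fin (L+1) → Fin 2)),
        0 ≤ Complex.normSq (GF q v y.castSucc y.succ σ') :=
      fun _ _ => Complex.normSq_nonneg _
    exact (Finset.sum_eq_zero_iff_of_nonneg hnn2).mp hy σ' (Finset.mem_univ σ')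
  exact Complex.normSq_eq_zero.mp (h1 x σ)

end XXZAux

namespace XXZAux

open Finset Matrix

variable {L : ℕ}

/-- the configuration with down spins exactly at positions `< k` -/
def low (L : ℕ) (k : ℕ) : Fin (L+1) → Fin 2 := fun y => if (y:ℕ) < k then 1 else 0

lemma low_eq_one_iff (k : ℕ) (y : Fin (L+1)) : low L k y = 1 ↔ (y:ℕ) < k := by
  unfold low
  split
  · simp [*]
  · simp [fin2_ne.symm, *]

lemma kC_low (k : ℕ) (hk : k ≤ L + 1) : kC (low L k) = k := by
  unfold kC
  have hfilter : (Finset.univ.filter fun y : Fin (L+1) => low L k y = 1)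
      = Finset.univ.filter fun y : Fin (L+1) => (y:ℕ) < k := by
    ext y; simp [low_eq_one_iff]
  rw [hfilter]
  rcases lt_or_eq_of_le hk with hk' | rfl
  · have : (Finset.univ.filter fun y : Fin (L+1) => (y:ℕ) < k) = Finset.Iio (⟨k, hk'⟩ : Fin (L+1)) := by
      ext y
      simp [Finset.mem_Iio, Fin.lt_def]
    rw [this, Fin.card_Iio]
  · have : (Finset.univ.filter fun y : Fin (L+1) => (y:ℕ) < L + 1) = Finset.univ := by
      ext y; simp [y.isLt]; omega
    rw [this, Finset.card_univ, Fintype.card_fin]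

lemma fin2_eq_one_of_ne (u : Fin 2) (h : u ≠ 0) : u = 1 := by omega
lemma fin2_eq_zero_of_ne (u : Fin 2) (h : u ≠ 1) : u = 0 := by omega

/-- monotonicity from no descent -/
lemma mono_of_noDescent (σ : Fin (L+1) → Fin 2)
    (h : ∀ x : Fin L, ¬(σ x.castSucc = 0 ∧ σ x.succ = 1)) :
    ∀ (y j : Fin (L+1)), j ≤ y → σ y = 1 → σ j = 1 := by
  suffices key : ∀ (n : ℕ) (y j : Fin (L+1)), (y:ℕ) = n → j ≤ y → σ y = 1 → σ j = 1 by
    intro y j hj hy; exact key (y:ℕ) y j rfl hj hy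
  intro n
  induction n with
  | zero =>
    intro y j hy hj h1
    have hjy := Fin.le_def.mp hj
    have : j = y := Fin.ext (by omega)
    rwa [this]
  | succ m ih =>
    intro y j hy hj h1
    rcases eq_or_ne j y with rfl | hne
    · exact h1
    · have hjm : (j:ℕ) ≤ m := by
        have := Fin.le_def.mp hj
        have : (j:ℕ) ≠ (y:ℕ) := fun hc => hne (Fin.ext hc)
        omega
      have hmL : m < L := by
        have := y.isLt
        omega
      set x : Fin L := ⟨m, hmL⟩ with hx
      have hxs : x.succ = y := by
        apply Fin.ext
        simp [Fin.val_succ, hx, hy]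
      have hcs : σ x.castSucc = 1 := by
        have := h x
        rw [hxs] at this
        rcases fin2_eq_one_of_ne (σ x.castSucc) (fun h0 => this ⟨h0, h1⟩) with h2
        exact h2
      exact ih x.castSucc j (by simp [hx]) (by rw [Fin.le_def]; simp [hx]; omega) hcs

lemma eq_low_of_noDescent (σ : Fin (L+1) → Fin 2)
    (h : ∀ x : Fin L, ¬(σ x.castSucc = 0 ∧ σ x.succ = 1)) :
    σ = low L (kC σ) := by
  have mono := mono_of_noDescent σ h
  have hiff : ∀ y : Fin (L+1), σ y = 1 ↔ (y:ℕ) < kC σ := by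
    intro y
    constructor
    · intro hy
      have hsub : Finset.Iic y ⊆ Finset.univ.filter fun z => σ z = 1 := by
        intro z hz
        simp only [Finset.mem_filter, Finset.mem_univ, true_and]
        exact mono y z (Finset.mem_Iic.mp hz) hy
      have := Finset.card_le_card hsub
      rw [Fin.card_Iic] at this
      unfold kC; omega
    · intro hy
      by_contra hne
      have hsub : (Finset.univ.filter fun z => σ z = 1) ⊆ Finset.Iio y := by
        intro z hz
        simp only [Finset.mem_filter, Finset.mem_univ, true_and] at hz
        rw [Finset.mem_Iio]
        by_contra hzy
        exact hne (mono z y (le_of_not_gt hzy) hz)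
      have := Finset.card_le_card hsub
      rw [Fin.card_Iio] at this
      unfold kC at hy; omega
  funext y
  rcases eq_or_ne (σ y) 1 with h1 | h1
  · rw [h1, eq_comm, low_eq_one_iff]
    exact (hiff y).mp h1
  · rw [fin2_eq_zero_of_ne _ h1, eq_comm]
    unfold low
    rw [if_neg]
    intro hc
    exact h1 ((hiff y).mpr hc)

/-- representation of kernel vectors -/
lemma rep (q : ℝ) (hq : 0 < q) (v : (Fin (L+1) → Fin 2) → ℂ)
    (hG : ∀ (x : Fin L) (σ : Fin (L+1) → Fin 2), GF q v x.castSucc x.succ σ = 0) :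
    ∀ σ, v σ = v (low L (kC σ)) * (q:ℂ)^(sS σ) / (q:ℂ)^(sS (low L (kC σ))) := by
  have hq0 : (q:ℂ) ≠ 0 := by exact_mod_cast hq.ne'
  suffices key : ∀ (n : ℕ) (σ : Fin (L+1) → Fin 2), sS σ = n →
      v σ = v (low L (kC σ)) * (q:ℂ)^(sS σ) / (q:ℂ)^(sS (low L (kC σ))) by
    intro σ; exact key (sS σ) σ rfl
  intro n
  induction n using Nat.strong_induction_on with
  | _ n ih =>
    intro σ hn
    by_cases hd : ∃ x : Fin L, σ x.castSucc = 0 ∧ σ x.succ = 1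
    · obtain ⟨x, hx0, hx1⟩ := hd
      have hσ : Function.update (Function.update σ x.castSucc 0) x.succ 1 = σ := by
        rw [← hx0, Function.update_eq_self, ← hx1, Function.update_eq_self]
      set σ₂ := Function.update (Function.update σ x.castSucc 1) x.succ 0 with hσ₂
      have hvv : v σ = (q:ℂ) * v σ₂ := by
        have := hG x σ
        unfold GF at this
        rw [hσ] at this
        exact sub_eq_zero.mp this
      obtain ⟨h1, h2, h3, h4⟩ := stats_upd x σ
      rw [hσ] at h1 h3
      have hkk : kC σ₂ = kC σ := by rw [h2, h1]
      have hss : sS σ = sS σ₂ + 1 := by rw [h3, h4]; ring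
      have hlt : sS σ₂ < n := by omega
      have ihσ₂ := ih (sS σ₂) hlt σ₂ rfl
      rw [hvv, ihσ₂, hkk, hss, pow_succ]
      ring
    · push_neg at hd
      have hlow : σ = low L (kC σ) := eq_low_of_noDescent σ (by
        intro x hx; exact (hd x hx.1 hx.2).elim)
      rw [← hlow]
      field_simp

lemma mem_span_psi (q : ℝ) (hq : 0 < q) (v : (Fin (L+1) → Fin 2) → ℂ)
    (hG : ∀ (x : Fin L) (σ : Fin (L+1) → Fin 2), GF q v x.castSucc x.succ σ = 0) :
    v ∈ Submodule.span ℂ (Set.range fun k : Fin (L + 2) => psiSector L q (k : ℕ)) := by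
  have hq0 : (q:ℂ) ≠ 0 := by exact_mod_cast hq.ne'
  have hv : v = ∑ k : Fin (L+2),
      (v (low L (k:ℕ)) / (q:ℂ)^(sS (low L (k:ℕ)))) • psiSector L q (k:ℕ) := by
    funext σ
    rw [Finset.sum_apply]
    have hk₀ : kC σ < L + 2 := by have := kC_le σ; omega
    rw [Finset.sum_eq_single (⟨kC σ, hk₀⟩ : Fin (L+2))]
    · simp only [Pi.smul_apply, smul_eq_mul]
      rw [psi_eq, if_pos (show kC σ = ((⟨kC σ, hk₀⟩ : Fin (L+2)) : ℕ) from rfl)]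
      rw [rep q hq v hG σ]
      ring
    · intro k _ hk
      simp only [Pi.smul_apply, smul_eq_mul, psi_eq]
      rw [if_neg, mul_zero]
      intro hc
      exact hk (Fin.ext (by simpa using hc.symm))
    · intro hc
      exact (hc (Finset.mem_univ _)).elim
  rw [hv]
  exact Submodule.sum_mem _ fun k _ =>
    Submodule.smul_mem _ _ (Submodule.subset_span ⟨k, rfl⟩)

end XXZAux

namespace XXZAux

open Finset Matrix

variable {L : ℕ}

lemma fin2_cases (u : Fin 2) : u = 0 ∨ u = 1 := by omega

lemma phi_apply (q : ℝ) (z : ℂ) (σ : Fin (L+1) → Fin 2) :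
    phi L q z σ = z^(kC σ) * (q:ℂ)^(sS σ) := by
  unfold phi
  have h1 : ∀ x : Fin (L+1), (![1, z * (q:ℂ)^(x:ℕ)] : Fin 2 → ℂ) (σ x)
      = if σ x = 1 then z * (q:ℂ)^(x:ℕ) else 1 := by
    intro x
    rcases fin2_cases (σ x) with h | h <;> simp [h, fin2_ne.symm]
  simp only [h1]
  rw [← Finset.prod_filter, Finset.prod_mul_distrib, Finset.prod_const,
    Finset.prod_pow_eq_pow_sum]
  rfl

lemma phi_decomp (q : ℝ) (z : ℂ) :
    phi L q z = ∑ k : Fin (L+2), z^(k:ℕ) • psiSector L q (k:ℕ) := by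
  funext σ
  rw [Finset.sum_apply, phi_apply]
  have hk₀ : kC σ < L + 2 := by have := kC_le σ; omega
  rw [Finset.sum_eq_single (⟨kC σ, hk₀⟩ : Fin (L+2))]
  · simp only [Pi.smul_apply, smul_eq_mul]
    rw [psi_eq, if_pos (show kC σ = ((⟨kC σ, hk₀⟩ : Fin (L+2)) : ℕ) from rfl)]
  · intro k _ hk
    simp only [Pi.smul_apply, smul_eq_mul]
    rw [psi_eq, if_neg, mul_zero]
    intro hc
    exact hk (Fin.ext (by simpa using hc.symm))
  · intro hc
    exact (hc (Finset.mem_univ _)).elim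

lemma phi_mem_span_psi (q : ℝ) (z : ℂ) :
    phi L q z ∈ Submodule.span ℂ (Set.range fun k : Fin (L + 2) => psiSector L q (k : ℕ)) := by
  rw [phi_decomp]
  exact Submodule.sum_mem _ fun k _ =>
    Submodule.smul_mem _ _ (Submodule.subset_span ⟨k, rfl⟩)

lemma psi_mem_span_phi (q : ℝ) (k₀ : Fin (L+2)) :
    psiSector L q (k₀ : ℕ) ∈ Submodule.span ℂ (Set.range (phi L q)) := by
  set V : Matrix (Fin (L+2)) (Fin (L+2)) ℂ := Matrix.vandermonde (fun i : Fin (L+2) => ((i:ℕ):ℂ)) with hV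
  have hdet : V.det ≠ 0 := by
    rw [hV, Matrix.det_vandermonde]
    rw [Finset.prod_ne_zero_iff]
    intro i _
    rw [Finset.prod_ne_zero_iff]
    intro j hj
    rw [Finset.mem_Ioi] at hj
    rw [sub_ne_zero]
    intro hc
    have : (j:ℕ) = (i:ℕ) := Nat.cast_injective hc
    exact absurd (Fin.ext this) hj.ne'
  have hinv : V⁻¹ * V = 1 := Matrix.nonsing_inv_mul V (isUnit_iff_ne_zero.mpr hdet)
  have hrep : psiSector L q (k₀ : ℕ) = ∑ j : Fin (L+2), (V⁻¹ k₀ j) • phi L q ((j:ℕ):ℂ) := by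
    have step1 : ∀ j : Fin (L+2), (V⁻¹ k₀ j) • phi L q ((j:ℕ):ℂ)
        = ∑ m : Fin (L+2), (V⁻¹ k₀ j * V j m) • psiSector L q (m:ℕ) := by
      intro j
      rw [phi_decomp, Finset.smul_sum]
      refine Finset.sum_congr rfl fun m _ => ?_
      rw [smul_smul]
      simp [hV, Matrix.vandermonde]
    simp only [step1]
    rw [Finset.sum_comm]
    have step2 : ∀ m : Fin (L+2),
        ∑ j : Fin (L+2), (V⁻¹ k₀ j * V j m) • psiSector L q (m:ℕ)
          = ((V⁻¹ * V) k₀ m) • psiSector L q (m:ℕ) := by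
      intro m
      rw [Matrix.mul_apply, ← Finset.sum_smul]
    simp only [step2, hinv, Matrix.one_apply]
    simp [ite_smul]
  rw [hrep]
  exact Submodule.sum_mem _ fun j _ =>
    Submodule.smul_mem _ _ (Submodule.subset_span ⟨_, rfl⟩)

lemma span_phi_eq_span_psi (q : ℝ) :
    Submodule.span ℂ (Set.range (phi L q))
      = Submodule.span ℂ (Set.range fun k : Fin (L + 2) => psiSector L q (k : ℕ)) := by
  apply le_antisymm
  · rw [Submodule.span_le]
    rintro w ⟨z, rfl⟩
    exact phi_mem_span_psi q z
  · rw [Submodule.span_le]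
    rintro w ⟨k, rfl⟩
    exact psi_mem_span_phi q k

lemma psi_indep (q : ℝ) (hq : 0 < q) :
    LinearIndependent ℂ (fun k : Fin (L+2) => psiSector L q (k:ℕ)) := by
  have hq0 : (q:ℂ) ≠ 0 := by exact_mod_cast hq.ne'
  rw [Fintype.linearIndependent_iff]
  intro g hg k
  have hk : (k:ℕ) ≤ L + 1 := by omega
  have h := congrFun hg (low L (k:ℕ))
  rw [Finset.sum_apply] at h
  simp only [Pi.smul_apply, smul_eq_mul, Pi.zero_apply] at h
  rw [Finset.sum_eq_single k] at h
  · rw [psi_eq, if_pos (by rw [kC_low _ hk])] at h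
    exact (mul_eq_zero.mp h).resolve_right (pow_ne_zero _ hq0)
  · intro j _ hj
    rw [psi_eq, if_neg, mul_zero]
    rw [kC_low _ hk]
    intro hc
    exact hj (Fin.ext hc.symm)
  · intro hc
    exact (hc (Finset.mem_univ _)).elim

end XXZAux

open XXZAux

/-- kernel of the finite XXZ kink chain Hamiltonian. -/
theorem HChain_kernel_eq_span_kinks (q : ℝ) (hq0 : 0 < q) (hq1 : q < 1)
    (L : ℕ) (hL : 1 ≤ L) :
    (∀ v : (Fin (L + 1) → Fin 2) → ℂ,
      (HChain L q).mulVec v = 0 ↔ v ∈ Submodule.span ℂ (Set.range (phi L q))) ∧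
    Submodule.span ℂ (Set.range (phi L q)) =
      Submodule.span ℂ (Set.range fun k : Fin (L + 2) => psiSector L q (k : ℕ)) ∧
    Module.finrank ℂ (LinearMap.ker (HChain L q).mulVecLin) = L + 2 := by
  have hspan := span_phi_eq_span_psi (L := L) q
  have hker : ∀ v : (Fin (L + 1) → Fin 2) → ℂ,
      (HChain L q).mulVec v = 0 ↔
        v ∈ Submodule.span ℂ (Set.range fun k : Fin (L + 2) => psiSector L q (k : ℕ)) := by
    intro v
    constructor
    · intro h
      exact mem_span_psi q hq0 v (GF_eq_zero_of_mulVec q hq0 v h)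
    · intro h
      have hle : Submodule.span ℂ (Set.range fun k : Fin (L + 2) => psiSector L q (k : ℕ))
          ≤ LinearMap.ker (HChain L q).mulVecLin := by
        rw [Submodule.span_le]
        rintro w ⟨k, rfl⟩
        rw [SetLike.mem_coe, LinearMap.mem_ker, Matrix.mulVecLin_apply]
        exact mulVec_eq_zero_of_GF q hq0 _ (fun x σ => GF_psi q hq0 _ x σ)
      have := hle h
      rwa [LinearMap.mem_ker, Matrix.mulVecLin_apply] at this
  refine ⟨fun v => by rw [hker v, hspan], hspan, ?_⟩
  have hkereq : LinearMap.ker (HChain L q).mulVecLin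
      = Submodule.span ℂ (Set.range fun k : Fin (L + 2) => psiSector L q (k : ℕ)) := by
    ext v
    rw [LinearMap.mem_ker, Matrix.mulVecLin_apply, hker v]
  rw [hkereq, finrank_span_eq_card (psi_indep q hq0), Fintype.card_fin]
end
end
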